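/- arXiv:1202.4623 — 3 statements merged into one kernel-verified Lean document; each statement's English description precedes it below -/
import Mathlib

section
/- Let a ∈ ℂ, a ≠ 0. There exist a constant C > 0 and an integer N such that for all n ≥ N, |∑_{k=2}^{n−1} a²/(16(k−1)k(n−k)(n+1−k)) − (a²/(8n²) + a²·log n/(4n³) + a²·(γ−1)/(4n³))| ≤ C/n⁴. -/
open Complex Finset

private lemma cast_ne_sub {p q : ℕ} (h : q ≠ p) : (p : ℂ) - (q : ℂ) ≠ 0 := by
  rw [sub_ne_zero]
  exact_mod_cast fun hh => h (by exact_mod_cast hh.symm)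

private lemma harm_castR (m : ℕ) :
    ((harmonic m : ℚ) : ℂ) = ∑ i ∈ Icc 1 m, (1 : ℂ) / (i : ℂ) := by
  rw [harmonic_eq_sum_Icc]
  push_cast
  simp [one_div]

private lemma sumC (n : ℕ) (hn : 3 ≤ n) :
    ∑ k ∈ Icc 2 (n - 1), (1 : ℂ) / (k : ℂ) = ((harmonic (n - 1) : ℚ) : ℂ) - 1 := by
  have hins : Icc 1 (n - 1) = insert 1 (Icc 2 (n - 1)) := by
    ext x; simp only [mem_Icc, mem_insert]; omega
  rw [harm_castR, hins, Finset.sum_insert (by simp)]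
  push_cast
  ring

private lemma sumA (n : ℕ) (hn : 3 ≤ n) :
    ∑ k ∈ Icc 2 (n - 1), (1 : ℂ) / ((k : ℂ) - 1) = ((harmonic (n - 2) : ℚ) : ℂ) := by
  rw [harm_castR]
  refine Finset.sum_nbij' (i := fun k => k - 1) (j := fun k => k + 1)
    ?_ ?_ ?_ ?_ ?_ <;> intro k hk <;> simp only [mem_Icc] at hk ⊢
  · omega
  · omega
  · omega
  · omega
  · have h1 : ((k - 1 : ℕ) : ℂ) = (k : ℂ) - 1 := by
      rw [Nat.cast_sub (by omega)]; push_cast; ring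
    rw [h1]

private lemma sumB (n : ℕ) :
    ∑ k ∈ Icc 2 (n - 1), (1 : ℂ) / ((n : ℂ) - (k : ℂ))
      = ∑ k ∈ Icc 2 (n - 1), (1 : ℂ) / ((k : ℂ) - 1) := by
  refine Finset.sum_nbij' (i := fun k => n + 1 - k) (j := fun k => n + 1 - k)
    ?_ ?_ ?_ ?_ ?_ <;> intro k hk <;> simp only [mem_Icc] at hk ⊢
  · omega
  · omega
  · omega
  · omega
  · have h1 : ((n + 1 - k : ℕ) : ℂ) = (n : ℂ) + 1 - (k : ℂ) := by
      rw [Nat.cast_sub (by omega)]; push_cast; ring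
    rw [h1]
    ring_nf

private lemma sumD (n : ℕ) :
    ∑ k ∈ Icc 2 (n - 1), (1 : ℂ) / ((n : ℂ) + 1 - (k : ℂ))
      = ∑ k ∈ Icc 2 (n - 1), (1 : ℂ) / (k : ℂ) := by
  refine Finset.sum_nbij' (i := fun k => n + 1 - k) (j := fun k => n + 1 - k)
    ?_ ?_ ?_ ?_ ?_ <;> intro k hk <;> simp only [mem_Icc] at hk ⊢
  · omega
  · omega
  · omega
  · omega
  · have h1 : ((n + 1 - k : ℕ) : ℂ) = (n : ℂ) + 1 - (k : ℂ) := by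
      rw [Nat.cast_sub (by omega)]; push_cast; ring
    rw [h1]

private lemma pf (n k : ℕ) (hn : 3 ≤ n) (h2 : 2 ≤ k) (hk : k ≤ n - 1) (a : ℂ) :
    a ^ 2 / (16 * ((k : ℂ) - 1) * (k : ℂ) * ((n : ℂ) - (k : ℂ)) * ((n : ℂ) + 1 - (k : ℂ)))
      = a ^ 2 * ((1 / ((n : ℂ) * ((n : ℂ) - 1)) * (1 / ((k : ℂ) - 1))
          + 1 / ((n : ℂ) * ((n : ℂ) - 1)) * (1 / ((n : ℂ) - (k : ℂ)))
          - 1 / ((n : ℂ) * ((n : ℂ) + 1)) * (1 / (k : ℂ))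
          - 1 / ((n : ℂ) * ((n : ℂ) + 1)) * (1 / ((n : ℂ) + 1 - (k : ℂ)))) / 16) := by
  have e1 : (k : ℂ) - 1 ≠ 0 := by
    have := cast_ne_sub (p := k) (q := 1) (by omega); simpa using this
  have e2 : (k : ℂ) ≠ 0 := Nat.cast_ne_zero.2 (by omega)
  have e3 : (n : ℂ) - (k : ℂ) ≠ 0 := cast_ne_sub (by omega)
  have e4 : (n : ℂ) + 1 - (k : ℂ) ≠ 0 := by
    have h1 : (n : ℂ) + 1 - (k : ℂ) = ((n + 1 : ℕ) : ℂ) - (k : ℂ) := by push_cast; ring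
    rw [h1]; exact cast_ne_sub (by omega)
  have e5 : (n : ℂ) ≠ 0 := Nat.cast_ne_zero.2 (by omega)
  have e6 : (n : ℂ) - 1 ≠ 0 := by
    have := cast_ne_sub (p := n) (q := 1) (by omega); simpa using this
  have e7 : (n : ℂ) + 1 ≠ 0 := by
    have h1 : (n : ℂ) + 1 = ((n + 1 : ℕ) : ℂ) - ((0 : ℕ) : ℂ) := by push_cast; ring
    rw [h1]; exact cast_ne_sub (by omega)
  have hcombo : ((1 / ((n : ℂ) * ((n : ℂ) - 1)) * (1 / ((k : ℂ) - 1))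
          + 1 / ((n : ℂ) * ((n : ℂ) - 1)) * (1 / ((n : ℂ) - (k : ℂ)))
          - 1 / ((n : ℂ) * ((n : ℂ) + 1)) * (1 / (k : ℂ))
          - 1 / ((n : ℂ) * ((n : ℂ) + 1)) * (1 / ((n : ℂ) + 1 - (k : ℂ)))) / 16)
        * (16 * ((k : ℂ) - 1) * (k : ℂ) * ((n : ℂ) - (k : ℂ)) * ((n : ℂ) + 1 - (k : ℂ))) = 1 := by
    have hA : (n : ℂ) * ((n : ℂ) - 1) * ((k : ℂ) - 1) ≠ 0 := mul_ne_zero (mul_ne_zero e5 e6) e1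
    have hB : (n : ℂ) * ((n : ℂ) - 1) * ((n : ℂ) - (k : ℂ)) ≠ 0 :=
      mul_ne_zero (mul_ne_zero e5 e6) e3
    have hC : (n : ℂ) * ((n : ℂ) + 1) * (k : ℂ) ≠ 0 := mul_ne_zero (mul_ne_zero e5 e7) e2
    have hD : (n : ℂ) * ((n : ℂ) + 1) * ((n : ℂ) + 1 - (k : ℂ)) ≠ 0 :=
      mul_ne_zero (mul_ne_zero e5 e7) e4
    rw [one_div_mul_one_div, one_div_mul_one_div, one_div_mul_one_div, one_div_mul_one_div,
      div_add_div _ _ hA hB, div_sub_div _ _ (mul_ne_zero hA hB) hC,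
      div_sub_div _ _ (mul_ne_zero (mul_ne_zero hA hB) hC) hD,
      div_div, div_mul_eq_mul_div,
      div_eq_one_iff_eq (mul_ne_zero (mul_ne_zero (mul_ne_zero (mul_ne_zero hA hB) hC) hD) (by norm_num : (16:ℂ) ≠ 0))]
    ring
  rw [div_eq_mul_inv, eq_inv_of_mul_eq_one_left hcombo]

private lemma key (n : ℕ) (hn : 3 ≤ n) (a : ℂ) :
    ∑ k ∈ Icc 2 (n - 1),
        a ^ 2 / (16 * ((k : ℂ) - 1) * (k : ℂ) * ((n : ℂ) - (k : ℂ)) * ((n : ℂ) + 1 - (k : ℂ)))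
      = a ^ 2 * ((4 * ((harmonic (n - 2) : ℚ) : ℂ) + 2 * n - 4)
          / (16 * ((n : ℂ) * ((n : ℂ) - 1) * ((n : ℂ) + 1)))) := by
  have e5 : (n : ℂ) ≠ 0 := Nat.cast_ne_zero.2 (by omega)
  have e6 : (n : ℂ) - 1 ≠ 0 := by
    have := cast_ne_sub (p := n) (q := 1) (by omega); simpa using this
  have e7 : (n : ℂ) + 1 ≠ 0 := by
    have h1 : (n : ℂ) + 1 = ((n + 1 : ℕ) : ℂ) - ((0 : ℕ) : ℂ) := by push_cast; ring
    rw [h1]; exact cast_ne_sub (by omega)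
  have hrel : ((harmonic (n - 1) : ℚ) : ℂ) = ((harmonic (n - 2) : ℚ) : ℂ) + 1 / ((n : ℂ) - 1) := by
    rw [show n - 1 = (n - 2) + 1 from by omega, harmonic_succ]
    have h1 : ((n - 2 : ℕ) : ℂ) = (n : ℂ) - 2 := by
      rw [Nat.cast_sub (by omega)]; push_cast; ring
    push_cast [h1]
    rw [one_div]
    congr 1
    ring
  rw [Finset.sum_congr rfl (fun k hk => pf n k hn (Finset.mem_Icc.1 hk).1
    (Finset.mem_Icc.1 hk).2 a), ← Finset.mul_sum]
  congr 1
  rw [← Finset.sum_div]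
  simp only [Finset.sum_sub_distrib, Finset.sum_add_distrib, ← Finset.mul_sum]
  rw [sumB n, sumD n, sumA n hn, sumC n hn, hrel]
  have h1 : ((harmonic (n - 2) : ℚ) : ℂ) + 1 / ((n : ℂ) - 1) - 1
      = (((harmonic (n - 2) : ℚ) : ℂ) * ((n : ℂ) - 1) + 1 - ((n : ℂ) - 1)) / ((n : ℂ) - 1) := by
    rw [eq_div_iff e6, sub_mul, add_mul, div_mul_cancel₀ _ e6]
    ring
  have h2 : 1 / ((n : ℂ) * ((n : ℂ) - 1)) * ((harmonic (n - 2) : ℚ) : ℂ)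
      = ((harmonic (n - 2) : ℚ) : ℂ) / ((n : ℂ) * ((n : ℂ) - 1)) := by ring
  rw [h1, h2, div_mul_div_comm, ← add_div, div_sub_div _ _
    (mul_ne_zero e5 e6) (mul_ne_zero (mul_ne_zero e5 e7) e6), div_sub_div _ _
    (mul_ne_zero (mul_ne_zero e5 e6) (mul_ne_zero (mul_ne_zero e5 e7) e6))
    (mul_ne_zero (mul_ne_zero e5 e7) e6), div_div,
    div_eq_div_iff (mul_ne_zero (mul_ne_zero (mul_ne_zero (mul_ne_zero e5 e6)
      (mul_ne_zero (mul_ne_zero e5 e7) e6)) (mul_ne_zero (mul_ne_zero e5 e7) e6)) (by norm_num : (16:ℂ) ≠ 0))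
    (mul_ne_zero (by norm_num : (16:ℂ) ≠ 0) (mul_ne_zero (mul_ne_zero e5 e6) e7))]
  ring

private lemma est_aux (x h L g : ℝ) (hx : 9 ≤ x) (hL0 : 0 ≤ L) (hLx : L ≤ x - 1)
    (hg1 : 1 / 2 < g) (hg2 : g < 2 / 3) (hd1 : h - (L + g) ≤ 0) (hd2 : -(6 / x) ≤ h - (L + g)) :
    |(4 * h + 2 * x - 4) / (16 * (x * (x - 1) * (x + 1)))
      - (2 / x ^ 2 + 4 * L / x ^ 3 + 4 * (g - 1) / x ^ 3) / 16| ≤ 4 / x ^ 4 := by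
  have hx0 : (0 : ℝ) < x := by linarith
  have hdx1 : (h - (L + g)) * x ≤ 0 := mul_nonpos_of_nonpos_of_nonneg hd1 hx0.le
  have hdx2 : -6 ≤ (h - (L + g)) * x := by
    have h4 : -(6 / x) * x = -6 := by
      rw [neg_mul, div_mul_cancel₀ _ (ne_of_gt hx0)]
    have h5 := mul_le_mul_of_nonneg_right hd2 hx0.le
    linarith
  have heq : (4 * h + 2 * x - 4) / (16 * (x * (x - 1) * (x + 1)))
      - (2 / x ^ 2 + 4 * L / x ^ 3 + 4 * (g - 1) / x ^ 3) / 16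
      = (4 * (h - (L + g)) * x ^ 2 + 2 * x + 4 * (L + g) - 4) / (16 * (x ^ 3 * (x ^ 2 - 1))) := by
    have hne1 : x ≠ 0 := ne_of_gt hx0
    have hne2 : x - 1 ≠ 0 := ne_of_gt (by linarith)
    have hne3 : x + 1 ≠ 0 := ne_of_gt (by linarith)
    have hd1' : (16 : ℝ) * (x * (x - 1) * (x + 1)) ≠ 0 :=
      mul_ne_zero (by norm_num) (mul_ne_zero (mul_ne_zero hne1 hne2) hne3)
    have hd2' : x ^ 3 * 16 ≠ 0 := mul_ne_zero (pow_ne_zero 3 hne1) (by norm_num)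
    have hdR : (16 : ℝ) * (x ^ 3 * (x ^ 2 - 1)) ≠ 0 :=
      mul_ne_zero (by norm_num) (mul_ne_zero (pow_ne_zero 3 hne1)
        (ne_of_gt (by nlinarith)))
    have e2 : (2 : ℝ) / x ^ 2 = 2 * x / x ^ 3 := by
      rw [div_eq_div_iff (pow_ne_zero 2 hne1) (pow_ne_zero 3 hne1)]; ring
    rw [e2, ← add_div, ← add_div, div_div, div_sub_div _ _ hd1' hd2',
      div_eq_div_iff (mul_ne_zero hd1' hd2') hdR]
    ring
  have hdenpos : (0 : ℝ) < 16 * (x ^ 3 * (x ^ 2 - 1)) := by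
    nlinarith [pow_pos hx0 3, mul_pos (pow_pos hx0 3) (show (0:ℝ) < x ^ 2 - 1 by nlinarith)]
  rw [heq, abs_div, abs_of_pos hdenpos, div_le_div_iff₀ hdenpos (by positivity)]
  have hnum : |4 * (h - (L + g)) * x ^ 2 + 2 * x + 4 * (L + g) - 4| ≤ 32 * x := by
    rw [abs_le]
    have h6 := mul_le_mul_of_nonneg_right hdx1 hx0.le
    have h7 := mul_le_mul_of_nonneg_right hdx2 hx0.le
    constructor <;> nlinarith
  have h8 := mul_le_mul_of_nonneg_right hnum (show (0 : ℝ) ≤ x ^ 4 by positivity)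
  nlinarith [h8, mul_le_mul_of_nonneg_right (show (81:ℝ) ≤ x ^ 2 by nlinarith)
    (pow_pos hx0 3).le, pow_pos hx0 3, pow_pos hx0 5]

private lemma est (n : ℕ) (hn : 9 ≤ n) :
    |(4 * ((harmonic (n - 2) : ℚ) : ℝ) + 2 * (n : ℝ) - 4)
        / (16 * ((n : ℝ) * ((n : ℝ) - 1) * ((n : ℝ) + 1)))
      - (2 / (n : ℝ) ^ 2 + 4 * Real.log n / (n : ℝ) ^ 3
          + 4 * (Real.eulerMascheroniConstant - 1) / (n : ℝ) ^ 3) / 16|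
      ≤ 4 / (n : ℝ) ^ 4 := by
  have hx : (9 : ℝ) ≤ (n : ℝ) := by exact_mod_cast hn
  have hx0 : (0 : ℝ) < n := by linarith
  have hg1 : 1 / 2 < Real.eulerMascheroniConstant := Real.one_half_lt_eulerMascheroniConstant
  have hg2 : Real.eulerMascheroniConstant < 2 / 3 := Real.eulerMascheroniConstant_lt_two_thirds
  have hm2 : ((n - 2 : ℕ) : ℝ) = (n : ℝ) - 2 := by
    rw [Nat.cast_sub (by omega)]; push_cast; ring
  have hub : Real.eulerMascheroniConstant
      < ((harmonic (n - 2) : ℚ) : ℝ) - Real.log ((n : ℝ) - 2) := by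
    have t := Real.eulerMascheroniConstant_lt_eulerMascheroniSeq' (n - 2)
    rw [Real.eulerMascheroniSeq', if_neg (by omega : ¬(n - 2) = 0), hm2] at t
    exact t
  have hlb : ((harmonic (n - 2) : ℚ) : ℝ) - Real.log ((n : ℝ) - 1)
      < Real.eulerMascheroniConstant := by
    have t := Real.eulerMascheroniSeq_lt_eulerMascheroniConstant (n - 2)
    rw [Real.eulerMascheroniSeq, hm2, show (n : ℝ) - 2 + 1 = (n : ℝ) - 1 from by ring] at t
    exact t
  have hL0 : 0 ≤ Real.log n := Real.log_nonneg (by linarith)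
  have hLx : Real.log n ≤ (n : ℝ) - 1 := Real.log_le_sub_one_of_pos hx0
  have hlog1 : Real.log ((n : ℝ) - 1) ≤ Real.log n :=
    Real.log_le_log (by linarith) (by linarith)
  have hlog2 : Real.log n - Real.log ((n : ℝ) - 2) ≤ 2 / ((n : ℝ) - 2) := by
    rw [← Real.log_div (by linarith) (by linarith)]
    have h1 := Real.log_le_sub_one_of_pos
      (show 0 < (n : ℝ) / ((n : ℝ) - 2) from div_pos (by linarith) (by linarith))
    have h2 : (n : ℝ) / ((n : ℝ) - 2) - 1 = 2 / ((n : ℝ) - 2) := by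
      rw [div_sub_one (ne_of_gt (by linarith : (0:ℝ) < (n : ℝ) - 2))]
      ring_nf
    linarith
  refine est_aux (n : ℝ) ((harmonic (n - 2) : ℚ) : ℝ) (Real.log n)
    Real.eulerMascheroniConstant hx hL0 hLx hg1 hg2 ?_ ?_
  · linarith
  · have h3 : (2 : ℝ) / ((n : ℝ) - 2) ≤ 6 / (n : ℝ) := by
      rw [div_le_div_iff₀ (by linarith) (by linarith)]
      nlinarith
    linarith

/-- There are `C > 0` and `N` such that for all `n ≥ N`,
`|∑_{k=2}^{n-1} a²/(16(k-1)k(n-k)(n+1-k)) - (a²/(8n²) + a² log n/(4n³) + a²(γ-1)/(4n³))| ≤ C/n⁴`,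
where `γ` is the Euler–Mascheroni constant. -/
theorem mathieu_stmt_16 (a : ℂ) (ha : a ≠ 0) :
    ∃ C > (0 : ℝ), ∃ N : ℕ, ∀ n ≥ N,
      ‖(∑ k ∈ Finset.Icc 2 (n - 1),
            a ^ 2 / (16 * ((k : ℂ) - 1) * (k : ℂ) * ((n : ℂ) - (k : ℂ)) * ((n : ℂ) + 1 - (k : ℂ))))
          - (a ^ 2 / (8 * (n : ℂ) ^ 2) + a ^ 2 * (Real.log n : ℂ) / (4 * (n : ℂ) ^ 3)
              + a ^ 2 * ((Real.eulerMascheroniConstant : ℂ) - 1) / (4 * (n : ℂ) ^ 3))‖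
        ≤ C / (n : ℝ) ^ 4 := by
  refine ⟨‖a‖ ^ 2 * 5, mul_pos (pow_pos (norm_pos_iff.2 ha) 2) (by norm_num), 9, fun n hn => ?_⟩
  have hn3 : 3 ≤ n := by omega
  have hx : (9 : ℝ) ≤ (n : ℝ) := by exact_mod_cast hn
  have hx0 : (0 : ℝ) < n := by linarith
  have hn0 : (n : ℂ) ≠ 0 := Nat.cast_ne_zero.2 (by omega)
  rw [key n hn3 a]
  have hc1 : a ^ 2 * ((4 * ((harmonic (n - 2) : ℚ) : ℂ) + 2 * n - 4)
          / (16 * ((n : ℂ) * ((n : ℂ) - 1) * ((n : ℂ) + 1))))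
      = a ^ 2 * (((4 * ((harmonic (n - 2) : ℚ) : ℝ) + 2 * (n : ℝ) - 4)
          / (16 * ((n : ℝ) * ((n : ℝ) - 1) * ((n : ℝ) + 1))) : ℝ) : ℂ) := by
    push_cast
    ring
  have hc2 : a ^ 2 / (8 * (n : ℂ) ^ 2) + a ^ 2 * (Real.log n : ℂ) / (4 * (n : ℂ) ^ 3)
        + a ^ 2 * ((Real.eulerMascheroniConstant : ℂ) - 1) / (4 * (n : ℂ) ^ 3)
      = a ^ 2 * (((2 / (n : ℝ) ^ 2 + 4 * Real.log n / (n : ℝ) ^ 3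
          + 4 * (Real.eulerMascheroniConstant - 1) / (n : ℝ) ^ 3) / 16 : ℝ) : ℂ) := by
    push_cast
    field_simp
    ring
  rw [hc1, hc2, ← mul_sub, ← Complex.ofReal_sub, norm_mul, Complex.norm_real,
    Real.norm_eq_abs, norm_pow]
  have hest := est n hn
  have h5 : ‖a‖ ^ 2 * |(4 * ((harmonic (n - 2) : ℚ) : ℝ) + 2 * (n : ℝ) - 4)
        / (16 * ((n : ℝ) * ((n : ℝ) - 1) * ((n : ℝ) + 1)))
      - (2 / (n : ℝ) ^ 2 + 4 * Real.log n / (n : ℝ) ^ 3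
          + 4 * (Real.eulerMascheroniConstant - 1) / (n : ℝ) ^ 3) / 16|
      ≤ ‖a‖ ^ 2 * (4 / (n : ℝ) ^ 4) :=
    mul_le_mul_of_nonneg_left hest (by positivity)
  refine le_trans h5 ?_
  rw [mul_div_assoc]
  gcongr
  nlinarith [sq_nonneg ‖a‖]
end

section
/- Let a ∈ ℂ, a ≠ 0. For every M > 0 there exist a constant C > 0 and an integer N such that for all n ≥ N and all z ∈ ℂ with |z| ≤ M/n², one has |Φ(n,z) − Φ(n,0)| ≤ C/n⁴ and also |∑_{k=2}^{n−1} |a|²/( |n²−(−n+2k)²+z|·|n²−(−n+2k−2)²+z| ) − ∑_{k=2}^{n−1} |a|²/(16(k−1)k(n−k)(n+1−k))| ≤ C/n⁴. -/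
open Complex


section helpers
open Finset


lemma sumIccInvSq (B : ℕ) : ∑ j ∈ Finset.Icc 1 B, (1:ℝ)/(j:ℝ)^2 ≤ 2 := by
  rcases Nat.eq_zero_or_pos B with hB | hB
  · simp [hB]
  · have key : ∀ b : ℕ, 1 ≤ b → ∑ j ∈ Finset.Icc 1 b, (1:ℝ)/(j:ℝ)^2 ≤ 2 - 1/(b:ℝ) := by
      intro b hb
      induction b, hb using Nat.le_induction with
      | base => norm_num
      | succ b hb ih =>
        rw [Finset.sum_Icc_succ_top (by omega)]
        have hb' : (1:ℝ) ≤ (b:ℝ) := by exact_mod_cast hb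
        have h1 : (1:ℝ)/((b:ℝ)+1)^2 ≤ 1/(b:ℝ) - 1/((b:ℝ)+1) := by
          rw [div_sub_div _ _ (by positivity) (by positivity),
            div_le_div_iff₀ (by positivity) (by positivity)]
          nlinarith
        push_cast
        nlinarith
    have h1 := key B hB
    have h2 : (0:ℝ) < 1/(B:ℝ) := by
      have : (0:ℝ) < B := by exact_mod_cast hB
      positivity
    linarith

lemma sumSubInvSq (s : Finset ℕ) (B : ℕ) (hs : s ⊆ Finset.Icc 1 B) :
    ∑ j ∈ s, (1:ℝ)/(j:ℝ)^2 ≤ 2 :=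
  le_trans (Finset.sum_le_sum_of_subset_of_nonneg hs (by intros; positivity)) (sumIccInvSq B)

lemma keySum (n : ℕ) (hn : 3 ≤ n) :
    ∑ k ∈ Finset.Icc 2 (n-1), (1:ℝ)/(((k:ℝ)-1)^2*((n:ℝ)+1-(k:ℝ))^2) ≤ 8/(n:ℝ)^2 := by
  have hstep : ∀ k ∈ Finset.Icc 2 (n-1),
      (1:ℝ)/(((k:ℝ)-1)^2*((n:ℝ)+1-(k:ℝ))^2)
        ≤ 2/(n:ℝ)^2 * (1/((k:ℝ)-1)^2 + 1/((n:ℝ)+1-(k:ℝ))^2) := by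
    intro k hk
    rw [Finset.mem_Icc] at hk
    have hk2 : (2:ℝ) ≤ (k:ℝ) := by exact_mod_cast hk.1
    have hkn : (k:ℝ) + 1 ≤ (n:ℝ) := by exact_mod_cast (by omega : k + 1 ≤ n)
    set u : ℝ := (k:ℝ) - 1 with hu
    set v : ℝ := (n:ℝ) + 1 - (k:ℝ) with hv
    have hu1 : (1:ℝ) ≤ u := by rw [hu]; linarith
    have hv1 : (1:ℝ) ≤ v := by rw [hv]; linarith
    have hnuv : (n:ℝ) = u + v := by rw [hu, hv]; ring
    rw [hnuv, div_add_div _ _ (by positivity) (by positivity), div_mul_div_comm,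
      div_le_div_iff₀ (by positivity) (by positivity)]
    nlinarith [sq_nonneg (u - v), sq_nonneg (u*v), mul_pos (mul_pos (by positivity : (0:ℝ) < u^2) (by positivity : (0:ℝ) < v^2)) (by positivity : (0:ℝ) < (u+v)^2)]
  have h1 : ∑ k ∈ Finset.Icc 2 (n-1), (1:ℝ)/((k:ℝ)-1)^2 ≤ 2 := by
    have hc : ∀ k ∈ Finset.Icc 2 (n-1), (1:ℝ)/((k:ℝ)-1)^2 = 1/(((k-1:ℕ)):ℝ)^2 := by
      intro k hk
      rw [Finset.mem_Icc] at hk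
      have : ((k-1:ℕ):ℝ) = (k:ℝ) - 1 := by
        have : 1 ≤ k := by omega
        push_cast [this]; ring
      rw [this]
    rw [Finset.sum_congr rfl hc]
    have himg := Finset.sum_image (s := Finset.Icc 2 (n-1)) (g := fun k => k - 1)
      (f := fun j : ℕ => (1:ℝ)/(j:ℝ)^2)
      (by intro x hx y hy h; simp only [Finset.coe_Icc, Set.mem_Icc, Finset.mem_coe, Finset.mem_Icc] at hx hy h; omega)
    rw [← himg]
    apply sumSubInvSq _ n
    intro j hj
    simp only [Finset.mem_image, Finset.mem_Icc] at hj ⊢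
    obtain ⟨x, hx, rfl⟩ := hj; omega
  have h2 : ∑ k ∈ Finset.Icc 2 (n-1), (1:ℝ)/((n:ℝ)+1-(k:ℝ))^2 ≤ 2 := by
    have hc : ∀ k ∈ Finset.Icc 2 (n-1), (1:ℝ)/((n:ℝ)+1-(k:ℝ))^2 = 1/(((n+1-k:ℕ)):ℝ)^2 := by
      intro k hk
      rw [Finset.mem_Icc] at hk
      have hkn : k ≤ n + 1 := by omega
      have : ((n+1-k:ℕ):ℝ) = (n:ℝ) + 1 - (k:ℝ) := by push_cast [hkn]; ring
      rw [this]
    rw [Finset.sum_congr rfl hc]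
    have himg := Finset.sum_image (s := Finset.Icc 2 (n-1)) (g := fun k => n + 1 - k)
      (f := fun j : ℕ => (1:ℝ)/(j:ℝ)^2)
      (by intro x hx y hy h; simp only [Finset.coe_Icc, Set.mem_Icc, Finset.mem_coe, Finset.mem_Icc] at hx hy h; omega)
    rw [← himg]
    apply sumSubInvSq _ n
    intro j hj
    simp only [Finset.mem_image, Finset.mem_Icc] at hj ⊢
    obtain ⟨x, hx, rfl⟩ := hj; omega
  calc ∑ k ∈ Finset.Icc 2 (n-1), (1:ℝ)/(((k:ℝ)-1)^2*((n:ℝ)+1-(k:ℝ))^2)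
      ≤ ∑ k ∈ Finset.Icc 2 (n-1),
          2/(n:ℝ)^2 * (1/((k:ℝ)-1)^2 + 1/((n:ℝ)+1-(k:ℝ))^2) :=
        Finset.sum_le_sum hstep
    _ = 2/(n:ℝ)^2 * ((∑ k ∈ Finset.Icc 2 (n-1), (1:ℝ)/((k:ℝ)-1)^2)
          + ∑ k ∈ Finset.Icc 2 (n-1), (1:ℝ)/((n:ℝ)+1-(k:ℝ))^2) := by
        rw [← Finset.mul_sum, Finset.sum_add_distrib]
    _ ≤ 2/(n:ℝ)^2 * (2 + 2) := by
        apply mul_le_mul_of_nonneg_left (by linarith) (by positivity)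
    _ = 8/(n:ℝ)^2 := by ring

lemma quotBound (a : ℂ) (P E : ℝ) (w : ℂ) (hP : 0 < P) (hw : P/2 ≤ ‖w‖)
    (hnum : ‖((P:ℝ):ℂ) - w‖ ≤ E) :
    ‖a^2/w - a^2/((P:ℝ):ℂ)‖ ≤ 2*‖a‖^2*E/P^2 ∧
    |‖a‖^2/‖w‖ - ‖a‖^2/P| ≤ 2*‖a‖^2*E/P^2 := by
  have hwpos : 0 < ‖w‖ := lt_of_lt_of_le (by positivity) hw
  have hw0 : w ≠ 0 := by simpa using hwpos.ne'
  have hP0 : ((P:ℝ):ℂ) ≠ 0 := Complex.ofReal_ne_zero.mpr hP.ne'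
  have hE : 0 ≤ E := le_trans (norm_nonneg _) hnum
  have hPn : ‖((P:ℝ):ℂ)‖ = P := by
    rw [Complex.norm_real, Real.norm_eq_abs, abs_of_pos hP]
  constructor
  · have h1 : a^2/w - a^2/((P:ℝ):ℂ) = a^2 * (((P:ℝ):ℂ) - w) / (w * ((P:ℝ):ℂ)) := by
      field_simp
    rw [h1, norm_div, norm_mul, norm_mul, norm_pow, hPn]
    calc ‖a‖^2 * ‖((P:ℝ):ℂ) - w‖ / (‖w‖ * P)
        ≤ ‖a‖^2 * E / (P/2 * P) := by
          gcongr
        _ = 2*‖a‖^2*E/P^2 := by field_simp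
  · have h1 : ‖a‖^2/‖w‖ - ‖a‖^2/P = ‖a‖^2 * (P - ‖w‖) / (‖w‖ * P) := by
      rw [div_sub_div _ _ hwpos.ne' hP.ne']
      ring_nf
    rw [h1, abs_div, abs_mul]
    have h2 : |P - ‖w‖| ≤ E := by
      calc |P - ‖w‖| = |‖((P:ℝ):ℂ)‖ - ‖w‖| := by rw [hPn]
        _ ≤ ‖((P:ℝ):ℂ) - w‖ := abs_norm_sub_norm_le _ _
        _ ≤ E := hnum
    have h3 : |‖w‖ * P| = ‖w‖ * P := abs_of_pos (by positivity)
    rw [h3]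
    calc |‖a‖^2| * |P - ‖w‖| / (‖w‖ * P)
        ≤ ‖a‖^2 * E / (P/2 * P) := by
          rw [_root_.abs_of_nonneg (by positivity : (0:ℝ) ≤ ‖a‖^2)]
          gcongr
        _ = 2*‖a‖^2*E/P^2 := by field_simp

end helpers

/-- `Φ(n,z) = ∑_{k=2}^{n-1} a² / ((n²-(-n+2k)²+z)(n²-(-n+2k-2)²+z))`. -/
noncomputable def PhiC (a : ℂ) (n : ℕ) (z : ℂ) : ℂ :=
  ∑ k ∈ Finset.Icc 2 (n - 1),
    a ^ 2 / (((n : ℂ) ^ 2 - (-(n : ℂ) + 2 * (k : ℂ)) ^ 2 + z) *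
      ((n : ℂ) ^ 2 - (-(n : ℂ) + 2 * (k : ℂ) - 2) ^ 2 + z))

set_option maxHeartbeats 1000000 in
/-- For every `M > 0` there are `C > 0` and `N` such that for all `n ≥ N` and `|z| ≤ M/n²`,
both `|Φ(n,z) - Φ(n,0)| ≤ C/n⁴` and
`|∑_{k=2}^{n-1} |a|²/(|n²-(-n+2k)²+z||n²-(-n+2k-2)²+z|)
   - ∑_{k=2}^{n-1} |a|²/(16(k-1)k(n-k)(n+1-k))| ≤ C/n⁴`. -/
theorem mathieu_stmt_17 (a : ℂ) (ha : a ≠ 0) (M : ℝ) (hM : 0 < M) :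
    ∃ C > (0 : ℝ), ∃ N : ℕ, ∀ n ≥ N, ∀ z : ℂ, ‖z‖ ≤ M / (n : ℝ) ^ 2 →
      ‖PhiC a n z - PhiC a n 0‖ ≤ C / (n : ℝ) ^ 4 ∧
      |(∑ k ∈ Finset.Icc 2 (n - 1),
            ‖a‖ ^ 2 / (‖(n : ℂ) ^ 2 - (-(n : ℂ) + 2 * (k : ℂ)) ^ 2 + z‖ *
              ‖(n : ℂ) ^ 2 - (-(n : ℂ) + 2 * (k : ℂ) - 2) ^ 2 + z‖))
          - ∑ k ∈ Finset.Icc 2 (n - 1),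
              ‖a‖ ^ 2 / (16 * ((k : ℝ) - 1) * (k : ℝ) * ((n : ℝ) - (k : ℝ)) *
                ((n : ℝ) + 1 - (k : ℝ)))|
        ≤ C / (n : ℝ) ^ 4 := by
  refine ⟨2*M*(‖a‖^2+1), by positivity, ⌈M⌉₊ + 3, ?_⟩
  intro n hn z hz
  have hn3 : 3 ≤ n := by omega
  have hn3' : (3:ℝ) ≤ (n:ℝ) := by exact_mod_cast hn3
  have hnM : M ≤ (n:ℝ) := by
    have h1 : M ≤ (⌈M⌉₊ : ℝ) := Nat.le_ceil M
    have h2 : ((⌈M⌉₊:ℕ) : ℝ) ≤ (n:ℝ) := by exact_mod_cast (by omega : ⌈M⌉₊ ≤ n)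
    linarith
  have hz1 : ‖z‖ ≤ 1 := by
    refine hz.trans ?_
    rw [div_le_one (by positivity)]
    nlinarith
  set B : ℕ → ℝ := fun k =>
    6*M*‖a‖^2/(256*((n:ℝ)-1)^2) * (1/(((k:ℝ)-1)^2*((n:ℝ)+1-(k:ℝ))^2)) with hB
  have key : ∀ k ∈ Finset.Icc 2 (n-1),
      ‖a ^ 2 / (((n : ℂ) ^ 2 - (-(n : ℂ) + 2 * (k : ℂ)) ^ 2 + z) *
          ((n : ℂ) ^ 2 - (-(n : ℂ) + 2 * (k : ℂ) - 2) ^ 2 + z))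
        - a ^ 2 / (((n : ℂ) ^ 2 - (-(n : ℂ) + 2 * (k : ℂ)) ^ 2 + 0) *
          ((n : ℂ) ^ 2 - (-(n : ℂ) + 2 * (k : ℂ) - 2) ^ 2 + 0))‖ ≤ B k ∧
      |‖a‖ ^ 2 / (‖(n : ℂ) ^ 2 - (-(n : ℂ) + 2 * (k : ℂ)) ^ 2 + z‖ *
            ‖(n : ℂ) ^ 2 - (-(n : ℂ) + 2 * (k : ℂ) - 2) ^ 2 + z‖)
        - ‖a‖ ^ 2 / (16 * ((k : ℝ) - 1) * (k : ℝ) * ((n : ℝ) - (k : ℝ)) *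
            ((n : ℝ) + 1 - (k : ℝ)))| ≤ B k := by
    intro k hk
    rw [Finset.mem_Icc] at hk
    have hk2 : (2:ℝ) ≤ (k:ℝ) := by exact_mod_cast hk.1
    have hkn : (k:ℝ) + 1 ≤ (n:ℝ) := by exact_mod_cast (by omega : k + 1 ≤ n)
    set p1 : ℝ := 4*(k:ℝ)*((n:ℝ)-(k:ℝ)) with hp1d
    set p2 : ℝ := 4*((k:ℝ)-1)*((n:ℝ)+1-(k:ℝ)) with hp2d
    have hp1 : 4*((n:ℝ)-1) ≤ p1 := by
      rw [hp1d]; nlinarith [mul_nonneg (by linarith : (0:ℝ) ≤ (k:ℝ)-1) (by linarith : (0:ℝ) ≤ (n:ℝ)-1-(k:ℝ))]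
    have hp2 : 4*((n:ℝ)-1) ≤ p2 := by
      rw [hp2d]; nlinarith [mul_nonneg (by linarith : (0:ℝ) ≤ (k:ℝ)-2) (by linarith : (0:ℝ) ≤ (n:ℝ)-(k:ℝ))]
    have hp1n : p1 ≤ (n:ℝ)^2 := by rw [hp1d]; nlinarith [sq_nonneg ((n:ℝ)-2*(k:ℝ))]
    have hp2n : p2 ≤ (n:ℝ)^2 := by rw [hp2d]; nlinarith [sq_nonneg ((n:ℝ)-2*(k:ℝ)+2)]
    have hp1pos : (0:ℝ) < p1 := by linarith
    have hp2pos : (0:ℝ) < p2 := by linarith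
    have h8a : (8:ℝ) ≤ p1 := by linarith
    have h8b : (8:ℝ) ≤ p2 := by linarith
    have e1z : (n:ℂ)^2 - (-(n:ℂ) + 2*(k:ℂ))^2 + z = ((p1:ℝ):ℂ) + z := by
      rw [hp1d]; push_cast; ring
    have e2z : (n:ℂ)^2 - (-(n:ℂ) + 2*(k:ℂ) - 2)^2 + z = ((p2:ℝ):ℂ) + z := by
      rw [hp2d]; push_cast; ring
    have e0 : ((n:ℂ)^2 - (-(n:ℂ) + 2*(k:ℂ))^2 + 0) *
        ((n:ℂ)^2 - (-(n:ℂ) + 2*(k:ℂ) - 2)^2 + 0) = ((p1*p2 : ℝ):ℂ) := by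
      rw [hp1d, hp2d]; push_cast; ring
    have hD1 : p1 - 1 ≤ ‖((p1:ℝ):ℂ) + z‖ := by
      have h := norm_add_le (((p1:ℝ):ℂ) + z) (-z)
      simp only [add_neg_cancel_right, norm_neg] at h
      rw [Complex.norm_real, Real.norm_eq_abs, abs_of_pos hp1pos] at h
      linarith
    have hD2 : p2 - 1 ≤ ‖((p2:ℝ):ℂ) + z‖ := by
      have h := norm_add_le (((p2:ℝ):ℂ) + z) (-z)
      simp only [add_neg_cancel_right, norm_neg] at h
      rw [Complex.norm_real, Real.norm_eq_abs, abs_of_pos hp2pos] at h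
      linarith
    have hwlow : p1*p2/2 ≤ ‖(((p1:ℝ):ℂ) + z) * (((p2:ℝ):ℂ) + z)‖ := by
      rw [norm_mul]
      have hm : (p1-1)*(p2-1) ≤ ‖((p1:ℝ):ℂ) + z‖ * ‖((p2:ℝ):ℂ) + z‖ :=
        mul_le_mul hD1 hD2 (by linarith) (norm_nonneg _)
      nlinarith
    have hnum : ‖((p1*p2 : ℝ):ℂ) - (((p1:ℝ):ℂ) + z) * (((p2:ℝ):ℂ) + z)‖ ≤ 3*M := by
      have e : ((p1*p2 : ℝ):ℂ) - (((p1:ℝ):ℂ) + z) * (((p2:ℝ):ℂ) + z)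
          = -(z * (((p1:ℝ):ℂ) + ((p2:ℝ):ℂ) + z)) := by push_cast; ring
      rw [e, norm_neg, norm_mul]
      have h1 : ‖((p1:ℝ):ℂ) + ((p2:ℝ):ℂ) + z‖ ≤ 3*(n:ℝ)^2 := by
        calc ‖((p1:ℝ):ℂ) + ((p2:ℝ):ℂ) + z‖
            ≤ ‖((p1:ℝ):ℂ)‖ + ‖((p2:ℝ):ℂ)‖ + ‖z‖ :=
              (norm_add_le _ _).trans (by gcongr; exact norm_add_le _ _)
          _ ≤ p1 + p2 + 1 := by
              rw [Complex.norm_real, Complex.norm_real, Real.norm_eq_abs, Real.norm_eq_abs,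
                abs_of_pos hp1pos, abs_of_pos hp2pos]
              linarith
          _ ≤ 3*(n:ℝ)^2 := by
              have h9 : (1:ℝ) ≤ (n:ℝ)^2 := by nlinarith
              linarith
      calc ‖z‖ * ‖((p1:ℝ):ℂ) + ((p2:ℝ):ℂ) + z‖
          ≤ (M/(n:ℝ)^2) * (3*(n:ℝ)^2) :=
            mul_le_mul hz h1 (norm_nonneg _) (by positivity)
        _ = 3*M := by
            field_simp
    obtain ⟨hc, hr⟩ := quotBound a (p1*p2) (3*M)
      ((((p1:ℝ):ℂ) + z) * (((p2:ℝ):ℂ) + z)) (by positivity) hwlow hnum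
    have hd : 256*((n:ℝ)-1)^2*(((k:ℝ)-1)^2*((n:ℝ)+1-(k:ℝ))^2) ≤ (p1*p2)^2 := by
      have h1 : 16*((n:ℝ)-1)^2 ≤ p1^2 := by nlinarith
      have hp2sq : p2^2 = 16*(((k:ℝ)-1)^2*((n:ℝ)+1-(k:ℝ))^2) := by rw [hp2d]; ring
      calc 256*((n:ℝ)-1)^2*(((k:ℝ)-1)^2*((n:ℝ)+1-(k:ℝ))^2)
          = (16*((n:ℝ)-1)^2) * (16*(((k:ℝ)-1)^2*((n:ℝ)+1-(k:ℝ))^2)) := by ring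
        _ ≤ p1^2 * p2^2 := by
            rw [hp2sq] at *
            exact mul_le_mul h1 le_rfl (by positivity) (by positivity)
        _ = (p1*p2)^2 := by ring
    have hBk : B k = 6*M*‖a‖^2/(256*((n:ℝ)-1)^2*(((k:ℝ)-1)^2*((n:ℝ)+1-(k:ℝ))^2)) := by
      rw [hB]
      simp only []
      rw [div_mul_div_comm, mul_one]
    have hfinal : 2*‖a‖^2*(3*M)/(p1*p2)^2 ≤ B k := by
      rw [hBk]
      have he : 2*‖a‖^2*(3*M) = 6*M*‖a‖^2 := by ring
      rw [he]
      have hden : (0:ℝ) < 256*((n:ℝ)-1)^2*(((k:ℝ)-1)^2*((n:ℝ)+1-(k:ℝ))^2) := by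
        have h1 : (0:ℝ) < (n:ℝ)-1 := by linarith
        have h2 : (0:ℝ) < (k:ℝ)-1 := by linarith
        have h3 : (0:ℝ) < (n:ℝ)+1-(k:ℝ) := by linarith
        positivity
      exact div_le_div_of_nonneg_left (by positivity) hden hd
    constructor
    · rw [e1z, e2z, e0]
      exact hc.trans hfinal
    · have hr16 : 16 * ((k:ℝ) - 1) * (k:ℝ) * ((n:ℝ) - (k:ℝ)) * ((n:ℝ) + 1 - (k:ℝ))
          = p1*p2 := by rw [hp1d, hp2d]; ring
      rw [e1z, e2z, ← norm_mul, hr16]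
      exact hr.trans hfinal
  have tail : ∑ k ∈ Finset.Icc 2 (n-1), B k ≤ 2*M*(‖a‖^2+1)/(n:ℝ)^4 := by
    have h1 : ∑ k ∈ Finset.Icc 2 (n-1), B k
        = 6*M*‖a‖^2/(256*((n:ℝ)-1)^2)
          * ∑ k ∈ Finset.Icc 2 (n-1), (1:ℝ)/(((k:ℝ)-1)^2*((n:ℝ)+1-(k:ℝ))^2) := by
      rw [Finset.mul_sum]
    rw [h1]
    have h2 : 6*M*‖a‖^2/(256*((n:ℝ)-1)^2)
          * ∑ k ∈ Finset.Icc 2 (n-1), (1:ℝ)/(((k:ℝ)-1)^2*((n:ℝ)+1-(k:ℝ))^2)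
        ≤ 6*M*‖a‖^2/(256*((n:ℝ)-1)^2) * (8/(n:ℝ)^2) :=
      mul_le_mul_of_nonneg_left (keySum n hn3) (by positivity)
    refine h2.trans ?_
    have hn1pos : (0:ℝ) < (n:ℝ) - 1 := by linarith
    have hnpos : (0:ℝ) < (n:ℝ) := by linarith
    rw [div_mul_div_comm, div_le_div_iff₀ (by positivity) (by positivity)]
    have h : (n:ℝ)^2 ≤ 4*((n:ℝ)-1)^2 := by nlinarith
    have key4 : (n:ℝ)^2*(n:ℝ)^2 ≤ (n:ℝ)^2*(4*((n:ℝ)-1)^2) :=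
      mul_le_mul_of_nonneg_left h (by positivity)
    nlinarith [norm_nonneg a, sq_nonneg (‖a‖),
      mul_le_mul_of_nonneg_left key4 (by positivity : (0:ℝ) ≤ M*‖a‖^2),
      mul_nonneg (mul_nonneg hM.le (sq_nonneg ‖a‖))
        (mul_nonneg (sq_nonneg ((n:ℝ)-1)) (sq_nonneg (n:ℝ)))]
  constructor
  · have hPhi : PhiC a n z - PhiC a n 0
        = ∑ k ∈ Finset.Icc 2 (n-1),
            (a ^ 2 / (((n : ℂ) ^ 2 - (-(n : ℂ) + 2 * (k : ℂ)) ^ 2 + z) *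
                ((n : ℂ) ^ 2 - (-(n : ℂ) + 2 * (k : ℂ) - 2) ^ 2 + z))
              - a ^ 2 / (((n : ℂ) ^ 2 - (-(n : ℂ) + 2 * (k : ℂ)) ^ 2 + 0) *
                ((n : ℂ) ^ 2 - (-(n : ℂ) + 2 * (k : ℂ) - 2) ^ 2 + 0))) := by
      rw [PhiC, PhiC, ← Finset.sum_sub_distrib]
    rw [hPhi]
    calc ‖_‖ ≤ ∑ k ∈ Finset.Icc 2 (n-1),
        ‖a ^ 2 / (((n : ℂ) ^ 2 - (-(n : ℂ) + 2 * (k : ℂ)) ^ 2 + z) *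
            ((n : ℂ) ^ 2 - (-(n : ℂ) + 2 * (k : ℂ) - 2) ^ 2 + z))
          - a ^ 2 / (((n : ℂ) ^ 2 - (-(n : ℂ) + 2 * (k : ℂ)) ^ 2 + 0) *
            ((n : ℂ) ^ 2 - (-(n : ℂ) + 2 * (k : ℂ) - 2) ^ 2 + 0))‖ := norm_sum_le _ _
      _ ≤ ∑ k ∈ Finset.Icc 2 (n-1), B k := Finset.sum_le_sum (fun k hk => (key k hk).1)
      _ ≤ 2*M*(‖a‖^2+1)/(n:ℝ)^4 := tail
  · rw [← Finset.sum_sub_distrib]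
    calc |∑ k ∈ Finset.Icc 2 (n-1),
          (‖a‖ ^ 2 / (‖(n : ℂ) ^ 2 - (-(n : ℂ) + 2 * (k : ℂ)) ^ 2 + z‖ *
              ‖(n : ℂ) ^ 2 - (-(n : ℂ) + 2 * (k : ℂ) - 2) ^ 2 + z‖)
            - ‖a‖ ^ 2 / (16 * ((k : ℝ) - 1) * (k : ℝ) * ((n : ℝ) - (k : ℝ)) *
                ((n : ℝ) + 1 - (k : ℝ))))|
        ≤ ∑ k ∈ Finset.Icc 2 (n-1),
          |‖a‖ ^ 2 / (‖(n : ℂ) ^ 2 - (-(n : ℂ) + 2 * (k : ℂ)) ^ 2 + z‖ *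
              ‖(n : ℂ) ^ 2 - (-(n : ℂ) + 2 * (k : ℂ) - 2) ^ 2 + z‖)
            - ‖a‖ ^ 2 / (16 * ((k : ℝ) - 1) * (k : ℝ) * ((n : ℝ) - (k : ℝ)) *
                ((n : ℝ) + 1 - (k : ℝ)))| := Finset.abs_sum_le_sum_abs _ _
      _ ≤ ∑ k ∈ Finset.Icc 2 (n-1), B k := Finset.sum_le_sum (fun k hk => (key k hk).2)
      _ ≤ 2*M*(‖a‖^2+1)/(n:ℝ)^4 := tail
end

section
/- Let a ∈ ℂ, a ≠ 0. For every M > 0 there exist a constant C > 0 and an integer N such that for all n ≥ N and all z₁, z₂ ∈ ℂ with |z₁| ≤ M/n² and |z₂| ≤ M/n², one has |α_n(z₁) − α_n(z₂) + (z₁ − z₂)·a²/(8n²)| ≤ C·|z₁ − z₂|/n⁴. -/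
set_option maxHeartbeats 1000000


open Complex

/-- Extended walk: `extWalk b e k j i` equals `b` for `i = 0`, `j (i-1)` for `1 ≤ i ≤ k`,
and `e` for `i > k`. -/
def extWalk (b e : ℤ) (k : ℕ) (j : Fin k → ℤ) : ℕ → ℤ := fun i =>
  if h : 1 ≤ i ∧ i ≤ k then j ⟨i - 1, by omega⟩ else if i = 0 then b else e

/-- Generic term of the sums `S_k^{ij}(n,z)`: for a `k`-tuple `j` of integers avoiding `±n`,
the value `V(j₁ - b) V(j₂ - j₁) ⋯ V(j_k - j_{k-1}) V(e - j_k) / ∏_s (n² - j_s² + z)`. -/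
noncomputable def Sterm (V : ℤ → ℂ) (n : ℕ) (z : ℂ) (b e : ℤ) (k : ℕ)
    (j : Fin k → {m : ℤ // m ≠ (n : ℤ) ∧ m ≠ -(n : ℤ)}) : ℂ :=
  (∏ i ∈ Finset.range (k + 1),
      V (extWalk b e k (fun s => (j s : ℤ)) (i + 1) - extWalk b e k (fun s => (j s : ℤ)) i)) /
    ∏ s : Fin k, ((n : ℂ) ^ 2 - ((j s : ℤ) : ℂ) ^ 2 + z)

/-- The Mathieu Fourier coefficients: `V(2) = V(-2) = a` and `V(m) = 0` for `m ≠ ±2`. -/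
noncomputable def mathieuV (a : ℂ) : ℤ → ℂ := fun m => if m = 2 ∨ m = -2 then a else 0

/-- `A_p(n,z)` for the Mathieu potential: the sum over `p`-tuples `(j₁,…,j_p)` of integers
avoiding `±n` of `V(-n+j₁) V(j₂-j₁) ⋯ V(j_p-j_{p-1}) V(n-j_p) / ∏_s (n²-j_s²+z)`. -/
noncomputable def Acoef (a : ℂ) (n : ℕ) (z : ℂ) (p : ℕ) : ℂ :=
  ∑' j : Fin p → {m : ℤ // m ≠ (n : ℤ) ∧ m ≠ -(n : ℤ)},
    Sterm (mathieuV a) n z (n : ℤ) (n : ℤ) p j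

/-- `α_n(z) = ∑_{p=1}^∞ A_p(n,z)`. -/
noncomputable def alphaC (a : ℂ) (n : ℕ) (z : ℂ) : ℂ := ∑' p : ℕ, Acoef a n z (p + 1)

noncomputable def Snum (a : ℂ) (b e : ℤ) (k : ℕ) (j : Fin k → ℤ) : ℂ :=
  ∏ i ∈ Finset.range (k + 1), mathieuV a (extWalk b e k j (i + 1) - extWalk b e k j i)

lemma Sterm_eq (a : ℂ) (n : ℕ) (z : ℂ) (b e : ℤ) (k : ℕ)
    (j : Fin k → {m : ℤ // m ≠ (n : ℤ) ∧ m ≠ -(n : ℤ)}) :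
    Sterm (mathieuV a) n z b e k j =
      Snum a b e k (fun s => (j s : ℤ)) / ∏ s : Fin k, ((n : ℂ) ^ 2 - ((j s : ℤ) : ℂ) ^ 2 + z) := rfl

lemma extWalk_zero (b e : ℤ) (k : ℕ) (j : Fin k → ℤ) : extWalk b e k j 0 = b := by
  simp [extWalk]

lemma extWalk_last (b e : ℤ) (k : ℕ) (j : Fin k → ℤ) : extWalk b e k j (k + 1) = e := by
  simp only [extWalk]
  rw [dif_neg (by omega), if_neg (by omega)]

lemma extWalk_mid (b e : ℤ) (k : ℕ) (j : Fin k → ℤ) (s : Fin k) :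
    extWalk b e k j (s + 1) = j s := by
  have h : 1 ≤ (s : ℕ) + 1 ∧ (s : ℕ) + 1 ≤ k := ⟨by omega, s.2⟩
  simp only [extWalk, dif_pos h]
  exact congrArg j (Fin.ext (by simp))

lemma mathieuV_ne_zero {a : ℂ} {m : ℤ} (h : mathieuV a m ≠ 0) : m = 2 ∨ m = -2 := by
  by_contra hc
  exact h (if_neg hc)

lemma snum_steps {a : ℂ} {b e : ℤ} {k : ℕ} {j : Fin k → ℤ} (h : Snum a b e k j ≠ 0) :
    ∀ i ∈ Finset.range (k + 1),
      extWalk b e k j (i + 1) - extWalk b e k j i = 2 ∨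
      extWalk b e k j (i + 1) - extWalk b e k j i = -2 := by
  intro i hi
  exact mathieuV_ne_zero (Finset.prod_ne_zero_iff.mp h i hi)

/-- The walk stays within distance `2i` of `b` and has even displacement. -/
lemma snum_walk_bound {a : ℂ} {b e : ℤ} {k : ℕ} {j : Fin k → ℤ} (h : Snum a b e k j ≠ 0) :
    ∀ i ≤ k + 1, |extWalk b e k j i - b| ≤ 2 * i ∧ (2 : ℤ) ∣ (extWalk b e k j i - b) := by
  intro i
  induction i with
  | zero => intro _; simp [extWalk_zero]
  | succ m ih =>
    intro hm
    have h1 := ih (by omega)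
    have h2 := snum_steps h m (Finset.mem_range.mpr (by omega))
    obtain ⟨hb, hd⟩ := h1
    constructor
    · rw [abs_le] at hb ⊢
      push_cast
      rcases h2 with h2 | h2 <;> omega
    · rcases h2 with h2 | h2 <;> omega

/-- For `b = e`, the number of steps `k+1` must be even for a nonzero numerator. -/
lemma snum_parity {a : ℂ} {b : ℤ} {k : ℕ} {j : Fin k → ℤ} (h : Snum a b b k j ≠ 0) :
    ¬ Even k := by
  intro hk
  have hsum : ∑ i ∈ Finset.range (k + 1),
      (extWalk b b k j (i + 1) - extWalk b b k j i) = 0 := by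
    rw [Finset.sum_range_sub]
    rw [extWalk_last, extWalk_zero]; ring
  have hmod : (0 : ℤ) % 4 = (∑ i ∈ Finset.range (k + 1),
      (extWalk b b k j (i + 1) - extWalk b b k j i)) % 4 := by rw [hsum]
  rw [Finset.sum_int_mod] at hmod
  have : ∀ i ∈ Finset.range (k + 1),
      (extWalk b b k j (i + 1) - extWalk b b k j i) % 4 = 2 := by
    intro i hi
    rcases snum_steps h i hi with h2 | h2 <;> rw [h2] <;> decide
  rw [Finset.sum_congr rfl this, Finset.sum_const, Finset.card_range] at hmod
  obtain ⟨t, ht⟩ := hk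
  simp only [nsmul_eq_mul] at hmod
  omega

lemma Acoef_even (a : ℂ) (n : ℕ) (z : ℂ) (k : ℕ) (hk : Even k) :
    (∑' j : Fin k → {m : ℤ // m ≠ (n : ℤ) ∧ m ≠ -(n : ℤ)},
      Sterm (mathieuV a) n z (n : ℤ) (n : ℤ) k j) = 0 := by
  have : ∀ j : Fin k → {m : ℤ // m ≠ (n : ℤ) ∧ m ≠ -(n : ℤ)},
      Sterm (mathieuV a) n z (n : ℤ) (n : ℤ) k j = 0 := by
    intro j
    rw [Sterm_eq]
    rcases eq_or_ne (Snum a (n : ℤ) (n : ℤ) k (fun s => (j s : ℤ))) 0 with h | h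
    · rw [h, zero_div]
    · exact absurd hk (snum_parity h)
  exact (tsum_congr this).trans tsum_zero

section L1
lemma norm_prod_inv_le {k : ℕ} (w : Fin k → ℂ) {c : ℝ} (hc : 0 < c)
    (h : ∀ s, c ≤ ‖w s‖) : ‖(∏ s, w s)⁻¹‖ ≤ (c ^ k)⁻¹ := by
  rw [norm_inv, norm_prod]
  have h1 : c ^ k ≤ ∏ s, ‖w s‖ := by
    calc c ^ k = ∏ _s : Fin k, c := by simp
      _ ≤ _ := Finset.prod_le_prod (by intros; positivity) (by intros; exact h _)
  exact inv_anti₀ (by positivity) h1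

lemma inv_sub_inv_norm_le {x y : ℂ} {c d : ℝ} (hc : 0 < c) (hx : c ≤ ‖x‖) (hy : c ≤ ‖y‖)
    (hd : ‖x - y‖ ≤ d) : ‖x⁻¹ - y⁻¹‖ ≤ d / c ^ 2 := by
  have hx0 : x ≠ 0 := by intro h; rw [h] at hx; simp at hx; linarith
  have hy0 : y ≠ 0 := by intro h; rw [h] at hy; simp at hy; linarith
  have key : x⁻¹ - y⁻¹ = (y - x) * x⁻¹ * y⁻¹ := by field_simp
  rw [key]
  have h1 : ‖y - x‖ ≤ d := by rwa [norm_sub_rev]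
  have h2 : ‖x⁻¹‖ ≤ c⁻¹ := by rw [norm_inv]; exact inv_anti₀ hc hx
  have h3 : ‖y⁻¹‖ ≤ c⁻¹ := by rw [norm_inv]; exact inv_anti₀ hc hy
  have hd0 : 0 ≤ d := (norm_nonneg _).trans hd
  calc ‖(y - x) * x⁻¹ * y⁻¹‖ = ‖y - x‖ * ‖x⁻¹‖ * ‖y⁻¹‖ := by rw [norm_mul, norm_mul]
    _ ≤ d * c⁻¹ * c⁻¹ :=
        mul_le_mul (mul_le_mul h1 h2 (norm_nonneg _) hd0) h3 (norm_nonneg _) (by positivity)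
    _ = d / c ^ 2 := by ring

lemma prod_inv_sub_prod_inv {c d : ℝ} (hc : 0 < c) (hd : 0 ≤ d) :
    ∀ {k : ℕ} (w₁ w₂ : Fin k → ℂ),
    (∀ s, c ≤ ‖w₁ s‖) → (∀ s, c ≤ ‖w₂ s‖) → (∀ s, ‖w₁ s - w₂ s‖ ≤ d) →
    ‖(∏ s, w₁ s)⁻¹ - (∏ s, w₂ s)⁻¹‖ ≤ k * d / c ^ (k + 1) := by
  intro k
  induction k with
  | zero => intro w₁ w₂ _ _ _; simp
  | succ k ih =>
    intro w₁ w₂ h1 h2 hdiff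
    have key : (∏ s, w₁ s)⁻¹ - (∏ s, w₂ s)⁻¹
        = ((w₁ 0)⁻¹ - (w₂ 0)⁻¹) * (∏ s : Fin k, w₁ s.succ)⁻¹
          + (w₂ 0)⁻¹ * ((∏ s : Fin k, w₁ s.succ)⁻¹ - (∏ s : Fin k, w₂ s.succ)⁻¹) := by
      rw [Fin.prod_univ_succ, Fin.prod_univ_succ, mul_inv, mul_inv]; ring
    rw [key]
    have hA : ‖((w₁ 0)⁻¹ - (w₂ 0)⁻¹) * (∏ s : Fin k, w₁ s.succ)⁻¹‖ ≤ d / c ^ 2 * (c ^ k)⁻¹ := by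
      rw [norm_mul]
      exact mul_le_mul (inv_sub_inv_norm_le hc (h1 0) (h2 0) (hdiff 0))
        (norm_prod_inv_le _ hc (fun s => h1 s.succ)) (norm_nonneg _) (by positivity)
    have hB : ‖(w₂ 0)⁻¹ * ((∏ s : Fin k, w₁ s.succ)⁻¹ - (∏ s : Fin k, w₂ s.succ)⁻¹)‖
        ≤ c⁻¹ * (k * d / c ^ (k + 1)) := by
      rw [norm_mul]
      refine mul_le_mul (by rw [norm_inv]; exact inv_anti₀ hc (h2 0))
        (ih (fun s => w₁ s.succ) (fun s => w₂ s.succ)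
          (fun s => h1 s.succ) (fun s => h2 s.succ) (fun s => hdiff s.succ))
        (norm_nonneg _) (by positivity)
    calc ‖_ + _‖ ≤ _ := norm_add_le _ _
      _ ≤ d / c ^ 2 * (c ^ k)⁻¹ + c⁻¹ * (k * d / c ^ (k + 1)) := add_le_add hA hB
      _ = (↑(k + 1) : ℝ) * d / c ^ (k + 1 + 1) := by
          push_cast
          field_simp
          ring
end L1

lemma int_den_lb (n : ℕ) (m : ℤ) (h2 : (2:ℤ) ∣ (m - (n:ℤ))) (hm1 : m ≠ (n:ℤ))
    (hm2 : m ≠ -(n:ℤ)) : 4 * (n:ℤ) - 4 ≤ |(n:ℤ) ^ 2 - m ^ 2| := by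
  have hx0 : (n:ℤ) - m ≠ 0 := by omega
  have hy0 : (n:ℤ) + m ≠ 0 := by omega
  have hxe : (2:ℤ) ∣ ((n:ℤ) - m) := by omega
  have hye : (2:ℤ) ∣ ((n:ℤ) + m) := by omega
  have h1 : 2 ≤ |(n:ℤ) - m| := by rcases abs_cases ((n:ℤ) - m) with h | h <;> omega
  have h1' : 2 ≤ |(n:ℤ) + m| := by rcases abs_cases ((n:ℤ) + m) with h | h <;> omega
  have hsum : 2 * (n:ℤ) ≤ |(n:ℤ) - m| + |(n:ℤ) + m| := by
    have h3 := abs_add_le ((n:ℤ) - m) ((n:ℤ) + m)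
    have h4 : ((n:ℤ) - m) + ((n:ℤ) + m) = 2 * n := by ring
    rw [h4] at h3
    have h5 : |(2:ℤ) * n| = 2 * n := abs_of_nonneg (by positivity)
    omega
  have key : 4 * (n:ℤ) - 4 ≤ |(n:ℤ) - m| * |(n:ℤ) + m| := by
    nlinarith [mul_nonneg (sub_nonneg.2 h1) (sub_nonneg.2 h1')]
  calc 4 * (n:ℤ) - 4 ≤ |(n:ℤ) - m| * |(n:ℤ) + m| := key
    _ = |((n:ℤ) - m) * ((n:ℤ) + m)| := (abs_mul _ _).symm
    _ = |(n:ℤ) ^ 2 - m ^ 2| := by congr 1; ring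

lemma den_lb (n : ℕ) (hn : 5 ≤ n) (z : ℂ) (hz : ‖z‖ ≤ 1) (m : ℤ)
    (h2 : (2:ℤ) ∣ (m - (n:ℤ))) (hm1 : m ≠ (n:ℤ)) (hm2 : m ≠ -(n:ℤ)) :
    3 * (n:ℝ) ≤ ‖(n:ℂ) ^ 2 - (m:ℂ) ^ 2 + z‖ := by
  have hA : ‖(n:ℂ) ^ 2 - (m:ℂ) ^ 2‖ - ‖z‖ ≤ ‖(n:ℂ) ^ 2 - (m:ℂ) ^ 2 + z‖ := by
    have h := norm_add_le ((n:ℂ) ^ 2 - (m:ℂ) ^ 2 + z) (-z)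
    simp only [add_neg_cancel_right, norm_neg] at h
    linarith
  have hB : (4 * (n:ℝ) - 4) ≤ ‖(n:ℂ) ^ 2 - (m:ℂ) ^ 2‖ := by
    have hcast : (n:ℂ) ^ 2 - (m:ℂ) ^ 2 = (((n:ℤ) ^ 2 - m ^ 2 : ℤ) : ℂ) := by push_cast; ring
    rw [hcast, Complex.norm_intCast]
    have := int_den_lb n m h2 hm1 hm2
    have h6 : ((4 * (n:ℤ) - 4 : ℤ) : ℝ) ≤ ((|(n:ℤ) ^ 2 - m ^ 2| : ℤ) : ℝ) := Int.cast_le.mpr this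
    push_cast at h6 ⊢
    linarith
  have hn' : (5:ℝ) ≤ (n:ℝ) := by exact_mod_cast hn
  linarith

abbrev Idx (n : ℕ) := {m : ℤ // m ≠ (n : ℤ) ∧ m ≠ -(n : ℤ)}

noncomputable def idxT (n k : ℕ) : Finset (Fin k → Idx n) :=
  Fintype.piFinset (fun _ =>
    (Finset.Icc ((n:ℤ) - 2 * (k + 1)) ((n:ℤ) + 2 * (k + 1))).subtype _)

lemma snum_mem_idxT {a : ℂ} {n k : ℕ} {j : Fin k → Idx n}
    (h : Snum a (n:ℤ) (n:ℤ) k (fun s => (j s : ℤ)) ≠ 0) : j ∈ idxT n k := by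
  rw [idxT, Fintype.mem_piFinset]
  intro s
  rw [Finset.mem_subtype, Finset.mem_Icc]
  have hb := (snum_walk_bound h ((s : ℕ) + 1) (by omega)).1
  rw [extWalk_mid] at hb
  have hk : (s:ℕ) + 1 ≤ k := s.2
  rw [abs_le] at hb
  constructor <;> push_cast at hb ⊢ <;> omega

lemma snum_dvd {a : ℂ} {n k : ℕ} {j : Fin k → Idx n}
    (h : Snum a (n:ℤ) (n:ℤ) k (fun s => (j s : ℤ)) ≠ 0) (s : Fin k) :
    (2:ℤ) ∣ ((j s : ℤ) - (n:ℤ)) := by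
  have hb := (snum_walk_bound h ((s : ℕ) + 1) (by have := s.2; omega)).2
  rwa [extWalk_mid] at hb

lemma sterm_zero_of_not_mem {a : ℂ} {n k : ℕ} (z : ℂ) {j : Fin k → Idx n}
    (hj : j ∉ idxT n k) : Sterm (mathieuV a) n z (n:ℤ) (n:ℤ) k j = 0 := by
  rw [Sterm_eq]
  rcases eq_or_ne (Snum a (n:ℤ) (n:ℤ) k (fun s => (j s : ℤ))) 0 with h | h
  · rw [h, zero_div]
  · exact absurd (snum_mem_idxT h) hj

lemma tsum_sterm_eq_sum (a : ℂ) (n : ℕ) (z : ℂ) (k : ℕ) :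
    (∑' j : Fin k → Idx n, Sterm (mathieuV a) n z (n:ℤ) (n:ℤ) k j) =
      ∑ j ∈ idxT n k, Sterm (mathieuV a) n z (n:ℤ) (n:ℤ) k j :=
  tsum_eq_sum (fun _ hj => sterm_zero_of_not_mem _ hj)

lemma card_snum_support (a : ℂ) (n k : ℕ) :
    ((idxT n k).filter
      (fun j => Snum a (n:ℤ) (n:ℤ) k (fun s => (j s : ℤ)) ≠ 0)).card ≤ 2 ^ k := by
  classical
  have hinj : Set.InjOn
      (fun (j : Fin k → Idx n) => fun s : Fin k =>
        decide (extWalk (n:ℤ) (n:ℤ) k (fun t => (j t : ℤ)) ((s:ℕ) + 1)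
          = extWalk (n:ℤ) (n:ℤ) k (fun t => (j t : ℤ)) (s:ℕ) + 2))
      ((idxT n k).filter
        (fun j => Snum a (n:ℤ) (n:ℤ) k (fun s => (j s : ℤ)) ≠ 0)) := by
    intro j hj j' hj' hφ
    simp only [Finset.coe_filter, Set.mem_setOf_eq] at hj hj'
    have hS := hj.2
    have hS' := hj'.2
    have main : ∀ i ≤ k, extWalk (n:ℤ) (n:ℤ) k (fun t => (j t : ℤ)) i
        = extWalk (n:ℤ) (n:ℤ) k (fun t => (j' t : ℤ)) i := by
      intro i
      induction i with
      | zero => intro _; rw [extWalk_zero, extWalk_zero]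
      | succ m ih =>
        intro hm
        have hIH := ih (by omega)
        have hs := snum_steps hS m (Finset.mem_range.mpr (by omega))
        have hs' := snum_steps hS' m (Finset.mem_range.mpr (by omega))
        have hφm := congrFun hφ ⟨m, by omega⟩
        simp only [decide_eq_decide] at hφm
        by_cases hP : extWalk (n:ℤ) (n:ℤ) k (fun t => (j t : ℤ)) (m + 1)
            = extWalk (n:ℤ) (n:ℤ) k (fun t => (j t : ℤ)) m + 2
        · rw [hP, hφm.mp hP, hIH]
        · have hQ : ¬ (extWalk (n:ℤ) (n:ℤ) k (fun t => (j' t : ℤ)) (m + 1)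
              = extWalk (n:ℤ) (n:ℤ) k (fun t => (j' t : ℤ)) m + 2) := fun h => hP (hφm.mpr h)
          omega
    funext s
    apply Subtype.ext
    have h1 := extWalk_mid (n:ℤ) (n:ℤ) k (fun t => (j t : ℤ)) s
    have h2 := extWalk_mid (n:ℤ) (n:ℤ) k (fun t => (j' t : ℤ)) s
    have h3 := main ((s:ℕ) + 1) s.2
    rw [h1, h2] at h3
    exact h3
  have := Finset.card_le_card_of_injOn _ (fun x _ => Finset.mem_univ _) hinj
  calc _ ≤ (Finset.univ : Finset (Fin k → Bool)).card := this
    _ = 2 ^ k := by simp [Finset.card_univ]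

lemma snum_norm_le (a : ℂ) (b e : ℤ) (k : ℕ) (j : Fin k → ℤ) :
    ‖Snum a b e k j‖ ≤ ‖a‖ ^ (k + 1) := by
  rw [Snum, norm_prod]
  calc ∏ i ∈ Finset.range (k+1), ‖mathieuV a _‖ ≤ ∏ _i ∈ Finset.range (k+1), ‖a‖ := by
        apply Finset.prod_le_prod (fun _ _ => norm_nonneg _)
        intro i _
        by_cases h : (extWalk b e k j (i + 1) - extWalk b e k j i) = 2 ∨
            (extWalk b e k j (i + 1) - extWalk b e k j i) = -2
        · rw [mathieuV, if_pos h]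
        · rw [mathieuV, if_neg h]; simp
    _ = ‖a‖ ^ (k + 1) := by rw [Finset.prod_const, Finset.card_range]

section bounds
variable {a : ℂ} {n k : ℕ}

lemma sterm_den_lb (hn : 5 ≤ n) {z : ℂ} (hz : ‖z‖ ≤ 1) {j : Fin k → Idx n}
    (hj : Snum a (n:ℤ) (n:ℤ) k (fun s => (j s : ℤ)) ≠ 0) (s : Fin k) :
    3 * (n:ℝ) ≤ ‖(n:ℂ) ^ 2 - ((j s : ℤ) : ℂ) ^ 2 + z‖ :=
  den_lb n hn z hz (j s : ℤ) (snum_dvd hj s) (j s).2.1 (j s).2.2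

lemma three_n_pos (hn : 5 ≤ n) : (0:ℝ) < 3 * (n:ℝ) := by
  have : (5:ℝ) ≤ (n:ℝ) := by exact_mod_cast hn
  linarith

lemma sterm_norm_le (hn : 5 ≤ n) {z : ℂ} (hz : ‖z‖ ≤ 1) (j : Fin k → Idx n) :
    ‖Sterm (mathieuV a) n z (n:ℤ) (n:ℤ) k j‖ ≤ ‖a‖ ^ (k + 1) * ((3 * (n:ℝ)) ^ k)⁻¹ := by
  rcases eq_or_ne (Snum a (n:ℤ) (n:ℤ) k (fun s => (j s : ℤ))) 0 with h | h
  · rw [Sterm_eq, h, zero_div, norm_zero]; positivity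
  · rw [Sterm_eq, div_eq_mul_inv, norm_mul]
    exact mul_le_mul (snum_norm_le a _ _ k _)
      (norm_prod_inv_le _ (three_n_pos hn) (sterm_den_lb hn hz h))
      (norm_nonneg _) (by positivity)

lemma sterm_diff_le (hn : 5 ≤ n) {z₁ z₂ : ℂ} (hz₁ : ‖z₁‖ ≤ 1) (hz₂ : ‖z₂‖ ≤ 1)
    {j : Fin k → Idx n} (hj : Snum a (n:ℤ) (n:ℤ) k (fun s => (j s : ℤ)) ≠ 0) :
    ‖Sterm (mathieuV a) n z₁ (n:ℤ) (n:ℤ) k j - Sterm (mathieuV a) n z₂ (n:ℤ) (n:ℤ) k j‖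
      ≤ ‖a‖ ^ (k + 1) * (k * ‖z₁ - z₂‖ / (3 * (n:ℝ)) ^ (k + 1)) := by
  rw [Sterm_eq, Sterm_eq, div_eq_mul_inv, div_eq_mul_inv, ← mul_sub, norm_mul]
  refine mul_le_mul (snum_norm_le a _ _ k _) ?_ (norm_nonneg _) (by positivity)
  refine prod_inv_sub_prod_inv (three_n_pos hn) (norm_nonneg _) _ _
    (sterm_den_lb hn hz₁ hj) (sterm_den_lb hn hz₂ hj) (fun s => ?_)
  have : ((n:ℂ) ^ 2 - ((j s : ℤ) : ℂ) ^ 2 + z₁) - ((n:ℂ) ^ 2 - ((j s : ℤ) : ℂ) ^ 2 + z₂)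
      = z₁ - z₂ := by ring
  rw [this]

lemma sum_bound_gen (a : ℂ) (n k : ℕ) (g : (Fin k → Idx n) → ℂ) (B : ℝ) (hB0 : 0 ≤ B)
    (hg0 : ∀ j, Snum a (n:ℤ) (n:ℤ) k (fun s => (j s : ℤ)) = 0 → g j = 0)
    (hB : ∀ j, Snum a (n:ℤ) (n:ℤ) k (fun s => (j s : ℤ)) ≠ 0 → ‖g j‖ ≤ B) :
    ‖∑ j ∈ idxT n k, g j‖ ≤ 2 ^ k * B := by
  classical
  set T' := (idxT n k).filter
    (fun j => Snum a (n:ℤ) (n:ℤ) k (fun s => (j s : ℤ)) ≠ 0) with hT'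
  have hsum : ∑ j ∈ idxT n k, g j = ∑ j ∈ T', g j := by
    rw [hT']
    exact (Finset.sum_filter_of_ne (fun j _ hgj => by
      intro hS; exact hgj (hg0 j hS))).symm
  rw [hsum]
  calc ‖∑ j ∈ T', g j‖ ≤ ∑ j ∈ T', ‖g j‖ := norm_sum_le _ _
    _ ≤ T'.card • B := Finset.sum_le_card_nsmul _ _ B
        (fun j hj => hB j (Finset.mem_filter.mp hj).2)
    _ = (T'.card : ℝ) * B := nsmul_eq_mul _ _
    _ ≤ 2 ^ k * B := by
        refine mul_le_mul_of_nonneg_right ?_ hB0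
        have := card_snum_support a n k
        calc (T'.card : ℝ) ≤ ((2:ℕ) ^ k : ℕ) := by exact_mod_cast this
          _ = 2 ^ k := by push_cast; ring

lemma tsum_sterm_norm_le (hn : 5 ≤ n) {z : ℂ} (hz : ‖z‖ ≤ 1) :
    ‖∑' j : Fin k → Idx n, Sterm (mathieuV a) n z (n:ℤ) (n:ℤ) k j‖
      ≤ 2 ^ k * (‖a‖ ^ (k + 1) * ((3 * (n:ℝ)) ^ k)⁻¹) := by
  rw [tsum_sterm_eq_sum]
  exact sum_bound_gen a n k _ _ (by positivity)
    (fun j hS => by rw [Sterm_eq, hS, zero_div])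
    (fun j _ => sterm_norm_le hn hz j)

lemma tsum_sterm_diff_le (hn : 5 ≤ n) {z₁ z₂ : ℂ} (hz₁ : ‖z₁‖ ≤ 1) (hz₂ : ‖z₂‖ ≤ 1) :
    ‖(∑' j : Fin k → Idx n, Sterm (mathieuV a) n z₁ (n:ℤ) (n:ℤ) k j)
      - (∑' j : Fin k → Idx n, Sterm (mathieuV a) n z₂ (n:ℤ) (n:ℤ) k j)‖
      ≤ 2 ^ k * (‖a‖ ^ (k + 1) * (k * ‖z₁ - z₂‖ / (3 * (n:ℝ)) ^ (k + 1))) := by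
  rw [tsum_sterm_eq_sum, tsum_sterm_eq_sum, ← Finset.sum_sub_distrib]
  exact sum_bound_gen a n k _ _ (by positivity)
    (fun j hS => by rw [Sterm_eq, Sterm_eq, hS, zero_div, zero_div, sub_zero])
    (fun j hS => sterm_diff_le hn hz₁ hz₂ hS)

end bounds

section Aone
variable {a : ℂ} {n : ℕ}

lemma sterm_one (z : ℂ) (j : Fin 1 → Idx n) :
    Sterm (mathieuV a) n z (n:ℤ) (n:ℤ) 1 j =
      mathieuV a ((j 0 : ℤ) - (n:ℤ)) * mathieuV a ((n:ℤ) - (j 0 : ℤ))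
        / ((n:ℂ) ^ 2 - ((j 0 : ℤ) : ℂ) ^ 2 + z) := by
  have h0 : extWalk (n:ℤ) (n:ℤ) 1 (fun s => (j s : ℤ)) 0 = (n:ℤ) := extWalk_zero _ _ _ _
  have h1 : extWalk (n:ℤ) (n:ℤ) 1 (fun s => (j s : ℤ)) 1 = (j 0 : ℤ) :=
    extWalk_mid (n:ℤ) (n:ℤ) 1 (fun s => (j s : ℤ)) 0
  have h2 : extWalk (n:ℤ) (n:ℤ) 1 (fun s => (j s : ℤ)) 2 = (n:ℤ) := extWalk_last _ _ _ _
  show (∏ i ∈ Finset.range 2, mathieuV a _) / _ = _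
  rw [Finset.prod_range_succ, Finset.prod_range_one, h0, h1, h2, Fin.prod_univ_one]

def jlo (n : ℕ) (hn : 5 ≤ n) : Idx n :=
  ⟨(n:ℤ) - 2, by constructor <;> omega⟩

def jhi (n : ℕ) (hn : 5 ≤ n) : Idx n :=
  ⟨(n:ℤ) + 2, by constructor <;> omega⟩

lemma A1_eq (hn : 5 ≤ n) (z : ℂ) :
    (∑' j : Fin 1 → Idx n, Sterm (mathieuV a) n z (n:ℤ) (n:ℤ) 1 j) =
      a ^ 2 / ((n:ℂ) ^ 2 - ((n:ℂ) - 2) ^ 2 + z)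
      + a ^ 2 / ((n:ℂ) ^ 2 - ((n:ℂ) + 2) ^ 2 + z) := by
  classical
  have hne : (fun _ : Fin 1 => jlo n hn) ≠ (fun _ : Fin 1 => jhi n hn) := by
    intro h
    have := congrFun h 0
    have h2 := congrArg Subtype.val this
    simp only [jlo, jhi] at h2
    omega
  rw [tsum_eq_sum (s := {fun _ : Fin 1 => jlo n hn, fun _ : Fin 1 => jhi n hn})
    (fun j hj => ?_), Finset.sum_pair hne]
  · rw [sterm_one z, sterm_one z]
    have e1 : ((jlo n hn : ℤ) : ℂ) = (n:ℂ) - 2 := by show (((n:ℤ) - 2 : ℤ) : ℂ) = _; push_cast; ring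
    have e2 : ((jhi n hn : ℤ) : ℂ) = (n:ℂ) + 2 := by show (((n:ℤ) + 2 : ℤ) : ℂ) = _; push_cast; ring
    have v1 : ((jlo n hn : ℤ)) - (n:ℤ) = -2 := by show (n:ℤ) - 2 - n = -2; ring
    have v2 : (n:ℤ) - ((jlo n hn : ℤ)) = 2 := by show (n:ℤ) - ((n:ℤ) - 2) = 2; ring
    have v3 : ((jhi n hn : ℤ)) - (n:ℤ) = 2 := by show (n:ℤ) + 2 - n = 2; ring
    have v4 : (n:ℤ) - ((jhi n hn : ℤ)) = -2 := by show (n:ℤ) - ((n:ℤ) + 2) = -2; ring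
    rw [v1, v2, v3, v4, e1, e2]
    have va : mathieuV a 2 = a := if_pos (Or.inl rfl)
    have vb : mathieuV a (-2) = a := if_pos (Or.inr rfl)
    rw [va, vb]
    ring
  · -- j outside the pair gives zero
    rw [sterm_one z]
    have hnum : mathieuV a ((j 0 : ℤ) - (n:ℤ)) * mathieuV a ((n:ℤ) - (j 0 : ℤ)) = 0 := by
      by_contra hc
      have h1 : mathieuV a ((j 0 : ℤ) - (n:ℤ)) ≠ 0 := fun h => hc (by rw [h, zero_mul])
      rcases mathieuV_ne_zero h1 with h | h
      · apply hj
        have : j = fun _ : Fin 1 => jhi n hn := by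
          funext s
          have hs : s = 0 := Subsingleton.elim _ _
          rw [hs]
          apply Subtype.ext
          show ((j 0 : ℤ)) = (n:ℤ) + 2
          omega
        rw [this]
        simp
      · apply hj
        have : j = fun _ : Fin 1 => jlo n hn := by
          funext s
          have hs : s = 0 := Subsingleton.elim _ _
          rw [hs]
          apply Subtype.ext
          show ((j 0 : ℤ)) = (n:ℤ) - 2
          omega
        rw [this]
        simp
    rw [hnum, zero_div]

end Aone

lemma ulb (n : ℕ) (hn : 5 ≤ n) (z : ℂ) (hz : ‖z‖ ≤ 1) :
    3 * (n:ℝ) ≤ ‖4 * (n:ℂ) - 4 + z‖ := by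
  have h := den_lb n hn z hz ((n:ℤ) - 2) (by omega) (by omega) (by omega)
  have e : (n:ℂ) ^ 2 - (((n:ℤ) - 2 : ℤ) : ℂ) ^ 2 + z = 4 * (n:ℂ) - 4 + z := by
    push_cast; ring
  rwa [e] at h

lemma vlb (n : ℕ) (hn : 5 ≤ n) (z : ℂ) (hz : ‖z‖ ≤ 1) :
    3 * (n:ℝ) ≤ ‖-(4 * (n:ℂ)) - 4 + z‖ := by
  have h := den_lb n hn z hz ((n:ℤ) + 2) (by omega) (by omega) (by omega)
  have e : (n:ℂ) ^ 2 - (((n:ℤ) + 2 : ℤ) : ℂ) ^ 2 + z = -(4 * (n:ℂ)) - 4 + z := by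
    push_cast; ring
  rwa [e] at h

lemma norm_div_le_of {x y : ℂ} {A B : ℝ} (hx : ‖x‖ ≤ A) (hy : B ≤ ‖y‖) (hB : 0 < B) :
    ‖x / y‖ ≤ A / B := by
  rw [norm_div]
  exact div_le_div₀ (le_trans (norm_nonneg _) hx) hx hB hy

lemma mul_lb3 {A B C a b c : ℝ} (ha : 0 ≤ a) (hb : 0 ≤ b) (hc : 0 ≤ c)
    (hA : a ≤ A) (hB : b ≤ B) (hC : c ≤ C) : a * b * c ≤ A * B * C :=
  mul_le_mul (mul_le_mul hA hB hb (ha.trans hA)) hC hc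
    (mul_nonneg (ha.trans hA) (hb.trans hB))

lemma prod2_lb {x y : ℂ} {c : ℝ} (hc : 0 ≤ c) (hx : c ≤ ‖x‖) (hy : c ≤ ‖y‖) :
    c ^ 2 ≤ ‖x * y‖ := by
  rw [norm_mul, sq]
  exact mul_le_mul hx hy hc (le_trans hc hx)

lemma main_est (a : ℂ) {M : ℝ} {n : ℕ} (hn : 5 ≤ n) (hM : 0 < M) (hMn : M ≤ (n:ℝ))
    {z₁ z₂ : ℂ} (h1 : ‖z₁‖ ≤ M / (n:ℝ) ^ 2) (h2 : ‖z₂‖ ≤ M / (n:ℝ) ^ 2) :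
    ‖(a ^ 2 / ((n:ℂ) ^ 2 - ((n:ℂ) - 2) ^ 2 + z₁) + a ^ 2 / ((n:ℂ) ^ 2 - ((n:ℂ) + 2) ^ 2 + z₁))
      - (a ^ 2 / ((n:ℂ) ^ 2 - ((n:ℂ) - 2) ^ 2 + z₂) + a ^ 2 / ((n:ℂ) ^ 2 - ((n:ℂ) + 2) ^ 2 + z₂))
      + (z₁ - z₂) * a ^ 2 / (8 * (n:ℂ) ^ 2)‖
      ≤ ‖a‖ ^ 2 * (2 + 20 * M + 2 * M ^ 2) * ‖z₁ - z₂‖ / (n:ℝ) ^ 4 := by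
  have hn5 : (5:ℝ) ≤ (n:ℝ) := by exact_mod_cast hn
  have hnp : (0:ℝ) < (n:ℝ) := by linarith
  have hM1 : M / (n:ℝ) ^ 2 ≤ 1 := by
    rw [div_le_one (by positivity)]; nlinarith
  have hz1' : ‖z₁‖ ≤ 1 := le_trans h1 hM1
  have hz2' : ‖z₂‖ ≤ 1 := le_trans h2 hM1
  set N := (n:ℂ) with hN
  have hNn : ‖N‖ = (n:ℝ) := by rw [hN, Complex.norm_natCast]
  have hu1 : 3 * (n:ℝ) ≤ ‖4 * N - 4 + z₁‖ := ulb n hn z₁ hz1'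
  have hu2 : 3 * (n:ℝ) ≤ ‖4 * N - 4 + z₂‖ := ulb n hn z₂ hz2'
  have hv1 : 3 * (n:ℝ) ≤ ‖-(4 * N) - 4 + z₁‖ := vlb n hn z₁ hz1'
  have hv2 : 3 * (n:ℝ) ≤ ‖-(4 * N) - 4 + z₂‖ := vlb n hn z₂ hz2'
  have hu0 : 3 * (n:ℝ) ≤ ‖4 * N - 4‖ := by have := ulb n hn 0 (by simp); simpa using this
  have hv0 : 3 * (n:ℝ) ≤ ‖-(4 * N) - 4‖ := by have := vlb n hn 0 (by simp); simpa using this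
  have h3n : (0:ℝ) < 3 * (n:ℝ) := by linarith
  have ne_of_lb : ∀ w : ℂ, 3 * (n:ℝ) ≤ ‖w‖ → w ≠ 0 := fun w hw h0 => by
    rw [h0, norm_zero] at hw; linarith
  have hu1' := ne_of_lb _ hu1
  have hu2' := ne_of_lb _ hu2
  have hv1' := ne_of_lb _ hv1
  have hv2' := ne_of_lb _ hv2
  have hu0' := ne_of_lb _ hu0
  have hv0' := ne_of_lb _ hv0
  have hN' : N ≠ 0 := by intro h; rw [h, norm_zero] at hNn; linarith
  have e1 : (n:ℂ) ^ 2 - ((n:ℂ) - 2) ^ 2 + z₁ = 4 * N - 4 + z₁ := by rw [hN]; ring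
  have e2 : (n:ℂ) ^ 2 - ((n:ℂ) + 2) ^ 2 + z₁ = -(4 * N) - 4 + z₁ := by rw [hN]; ring
  have e3 : (n:ℂ) ^ 2 - ((n:ℂ) - 2) ^ 2 + z₂ = 4 * N - 4 + z₂ := by rw [hN]; ring
  have e4 : (n:ℂ) ^ 2 - ((n:ℂ) + 2) ^ 2 + z₂ = -(4 * N) - 4 + z₂ := by rw [hN]; ring
  rw [e1, e2, e3, e4]
  set T0 : ℂ := (256 - 768 * N ^ 2) / ((8 * N ^ 2) * ((4 * N - 4) * (4 * N - 4))
    * ((-(4 * N) - 4) * (-(4 * N) - 4))) with hT0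
  set T1 : ℂ := ((4 * N - 4) * (z₁ + z₂) + z₁ * z₂)
    / (((4 * N - 4) * (4 * N - 4)) * ((4 * N - 4 + z₁) * (4 * N - 4 + z₂))) with hT1
  set T2 : ℂ := ((-(4 * N) - 4) * (z₁ + z₂) + z₁ * z₂)
    / (((-(4 * N) - 4) * (-(4 * N) - 4)) * ((-(4 * N) - 4 + z₁) * (-(4 * N) - 4 + z₂))) with hT2
  have hA1 : a ^ 2 / (4 * N - 4 + z₁) - a ^ 2 / (4 * N - 4 + z₂)
      = a ^ 2 * (z₂ - z₁) * (1 / ((4 * N - 4 + z₁) * (4 * N - 4 + z₂))) := by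
    rw [div_sub_div _ _ hu1' hu2']
    field_simp
    ring
  have hA2 : a ^ 2 / (-(4 * N) - 4 + z₁) - a ^ 2 / (-(4 * N) - 4 + z₂)
      = a ^ 2 * (z₂ - z₁) * (1 / ((-(4 * N) - 4 + z₁) * (-(4 * N) - 4 + z₂))) := by
    rw [div_sub_div _ _ hv1' hv2']
    field_simp
    ring
  have hB : (1:ℂ) / (8 * N ^ 2) - 1 / ((4 * N - 4) * (4 * N - 4))
      - 1 / ((-(4 * N) - 4) * (-(4 * N) - 4)) = T0 := by
    rw [hT0]
    rw [div_sub_div _ _ (mul_ne_zero (by norm_num) (pow_ne_zero 2 hN')) (mul_ne_zero hu0' hu0'),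
      div_sub_div _ _ (mul_ne_zero (mul_ne_zero (by norm_num) (pow_ne_zero 2 hN')) (mul_ne_zero hu0' hu0')) (mul_ne_zero hv0' hv0')]
    congr 1
    ring
  have hC : (1:ℂ) / ((4 * N - 4) * (4 * N - 4))
      - 1 / ((4 * N - 4 + z₁) * (4 * N - 4 + z₂)) = T1 := by
    rw [hT1]
    rw [div_sub_div _ _ (mul_ne_zero hu0' hu0') (mul_ne_zero hu1' hu2')]
    congr 1
    ring
  have hD : (1:ℂ) / ((-(4 * N) - 4) * (-(4 * N) - 4))
      - 1 / ((-(4 * N) - 4 + z₁) * (-(4 * N) - 4 + z₂)) = T2 := by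
    rw [hT2]
    rw [div_sub_div _ _ (mul_ne_zero hv0' hv0') (mul_ne_zero hv1' hv2')]
    congr 1
    ring
  have hE : T0 + T1 + T2 = 1 / (8 * N ^ 2)
      - 1 / ((4 * N - 4 + z₁) * (4 * N - 4 + z₂))
      - 1 / ((-(4 * N) - 4 + z₁) * (-(4 * N) - 4 + z₂)) := by
    rw [← hB, ← hC, ← hD]; ring
  have key : (a ^ 2 / (4 * N - 4 + z₁) + a ^ 2 / (-(4 * N) - 4 + z₁))
      - (a ^ 2 / (4 * N - 4 + z₂) + a ^ 2 / (-(4 * N) - 4 + z₂))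
      + (z₁ - z₂) * a ^ 2 / (8 * N ^ 2)
      = (z₁ - z₂) * a ^ 2 * (T0 + T1 + T2) := by
    have hsplit : (a ^ 2 / (4 * N - 4 + z₁) + a ^ 2 / (-(4 * N) - 4 + z₁))
        - (a ^ 2 / (4 * N - 4 + z₂) + a ^ 2 / (-(4 * N) - 4 + z₂))
        + (z₁ - z₂) * a ^ 2 / (8 * N ^ 2)
        = (a ^ 2 / (4 * N - 4 + z₁) - a ^ 2 / (4 * N - 4 + z₂))
        + (a ^ 2 / (-(4 * N) - 4 + z₁) - a ^ 2 / (-(4 * N) - 4 + z₂))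
        + (z₁ - z₂) * a ^ 2 * (1 / (8 * N ^ 2)) := by ring
    rw [hsplit, hA1, hA2, hE]
    ring
  rw [key, norm_mul, norm_mul, norm_pow]
  -- bounds
  have hb0 : ‖T0‖ ≤ 2 / (n:ℝ) ^ 4 := by
    rw [hT0]
    have hnum : ‖(256 : ℂ) - 768 * N ^ 2‖ ≤ 1024 * (n:ℝ) ^ 2 := by
      calc ‖(256 : ℂ) - 768 * N ^ 2‖ ≤ ‖(256:ℂ)‖ + ‖(768:ℂ) * N ^ 2‖ := norm_sub_le _ _
        _ = 256 + 768 * (n:ℝ) ^ 2 := by rw [norm_mul, norm_pow, hNn]; norm_num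
        _ ≤ 1024 * (n:ℝ) ^ 2 := by nlinarith
    have hden : 648 * (n:ℝ) ^ 6 ≤ ‖(8 * N ^ 2) * ((4 * N - 4) * (4 * N - 4))
        * ((-(4 * N) - 4) * (-(4 * N) - 4))‖ := by
      rw [norm_mul, norm_mul]
      have h8 : ‖(8:ℂ) * N ^ 2‖ = 8 * (n:ℝ) ^ 2 := by
        rw [norm_mul, norm_pow, hNn]; norm_num
      rw [h8]
      calc 648 * (n:ℝ) ^ 6
          = 8 * (n:ℝ) ^ 2 * (3 * (n:ℝ)) ^ 2 * (3 * (n:ℝ)) ^ 2 := by ring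
        _ ≤ 8 * (n:ℝ) ^ 2 * ‖(4 * N - 4) * (4 * N - 4)‖
            * ‖(-(4 * N) - 4) * (-(4 * N) - 4)‖ :=
            mul_lb3 (by positivity) (by positivity) (by positivity) le_rfl
              (prod2_lb h3n.le hu0 hu0) (prod2_lb h3n.le hv0 hv0)
    calc ‖_ / _‖ ≤ (1024 * (n:ℝ) ^ 2) / (648 * (n:ℝ) ^ 6) :=
          norm_div_le_of hnum hden (by positivity)
      _ ≤ 2 / (n:ℝ) ^ 4 := by
          rw [div_le_div_iff₀ (by positivity) (by positivity)]
          have e : (n:ℝ) ^ 2 * ((n:ℝ) ^ 4) = (n:ℝ) ^ 6 := by ring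
          nlinarith [pow_pos hnp 6]
  have hnum12 : ∀ w : ℂ, ‖w‖ ≤ 4 * (n:ℝ) + 4 →
      ‖w * (z₁ + z₂) + z₁ * z₂‖ ≤ (10 * M + M ^ 2) / (n:ℝ) := by
    intro w hw
    have hzz : ‖z₁ + z₂‖ ≤ 2 * M / (n:ℝ) ^ 2 := by
      calc ‖z₁ + z₂‖ ≤ ‖z₁‖ + ‖z₂‖ := norm_add_le _ _
        _ ≤ 2 * M / (n:ℝ) ^ 2 := by rw [mul_div_assoc]; linarith
    calc ‖w * (z₁ + z₂) + z₁ * z₂‖ ≤ ‖w‖ * ‖z₁ + z₂‖ + ‖z₁‖ * ‖z₂‖ := by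
          refine le_trans (norm_add_le _ _) ?_
          rw [norm_mul, norm_mul]
      _ ≤ (4 * (n:ℝ) + 4) * (2 * M / (n:ℝ) ^ 2) + (M / (n:ℝ) ^ 2) * (M / (n:ℝ) ^ 2) := by
          refine add_le_add (mul_le_mul hw hzz (norm_nonneg _) (by positivity)) ?_
          exact mul_le_mul h1 h2 (norm_nonneg _) (by positivity)
      _ ≤ 10 * M / (n:ℝ) + M ^ 2 / (n:ℝ) := by
          have hA : (4 * (n:ℝ) + 4) * (2 * M / (n:ℝ) ^ 2) ≤ 10 * M / (n:ℝ) := by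
            have e : (4 * (n:ℝ) + 4) * (2 * M / (n:ℝ) ^ 2)
                = (8 * M * (n:ℝ) + 8 * M) / (n:ℝ) ^ 2 := by ring
            rw [e, div_le_div_iff₀ (by positivity) (by positivity)]
            nlinarith [mul_nonneg (mul_nonneg hM.le hnp.le) (show (0:ℝ) ≤ (n:ℝ) - 4 by linarith)]
          have hB : (M / (n:ℝ) ^ 2) * (M / (n:ℝ) ^ 2) ≤ M ^ 2 / (n:ℝ) := by
            have e : (M / (n:ℝ) ^ 2) * (M / (n:ℝ) ^ 2) = M ^ 2 / (n:ℝ) ^ 4 := by ring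
            rw [e]
            exact div_le_div_of_nonneg_left (by positivity) hnp
              (by nlinarith [sq_nonneg ((n:ℝ) ^ 2 - 1), sq_nonneg ((n:ℝ) - 1)])
          linarith
      _ = (10 * M + M ^ 2) / (n:ℝ) := by rw [← add_div]
  have hwu : ‖4 * N - 4‖ ≤ 4 * (n:ℝ) + 4 := by
    calc ‖4 * N - 4‖ ≤ ‖(4:ℂ) * N‖ + ‖(4:ℂ)‖ := norm_sub_le _ _
      _ = 4 * (n:ℝ) + 4 := by rw [norm_mul, hNn]; norm_num
  have hwv : ‖-(4 * N) - 4‖ ≤ 4 * (n:ℝ) + 4 := by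
    calc ‖-(4 * N) - 4‖ ≤ ‖-((4:ℂ) * N)‖ + ‖(4:ℂ)‖ := norm_sub_le _ _
      _ = 4 * (n:ℝ) + 4 := by rw [norm_neg, norm_mul, hNn]; norm_num
  have hden14 : ∀ w₁ w₂ w₃ w₄ : ℂ, 3 * (n:ℝ) ≤ ‖w₁‖ → 3 * (n:ℝ) ≤ ‖w₂‖ →
      3 * (n:ℝ) ≤ ‖w₃‖ → 3 * (n:ℝ) ≤ ‖w₄‖ →
      81 * (n:ℝ) ^ 4 ≤ ‖(w₁ * w₂) * (w₃ * w₄)‖ := by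
    intro w₁ w₂ w₃ w₄ hw1 hw2 hw3 hw4
    calc 81 * (n:ℝ) ^ 4 = (3 * (n:ℝ)) ^ 2 * (3 * (n:ℝ)) ^ 2 := by ring
      _ ≤ ‖w₁ * w₂‖ * ‖w₃ * w₄‖ :=
          mul_le_mul (prod2_lb h3n.le hw1 hw2) (prod2_lb h3n.le hw3 hw4)
            (by positivity) (le_trans (by positivity) (prod2_lb h3n.le hw1 hw2))
      _ = ‖(w₁ * w₂) * (w₃ * w₄)‖ := (norm_mul _ _).symm
  have hb1 : ‖T1‖ ≤ (10 * M + M ^ 2) / (n:ℝ) ^ 4 := by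
    rw [hT1]
    calc ‖_ / _‖ ≤ ((10 * M + M ^ 2) / (n:ℝ)) / (81 * (n:ℝ) ^ 4) :=
          norm_div_le_of (hnum12 _ hwu) (hden14 _ _ _ _ hu0 hu0 hu1 hu2) (by positivity)
      _ ≤ (10 * M + M ^ 2) / (n:ℝ) ^ 4 := by
          rw [div_div]
          refine div_le_div_of_nonneg_left (by positivity) (by positivity) ?_
          nlinarith [pow_pos hnp 4]
  have hb2 : ‖T2‖ ≤ (10 * M + M ^ 2) / (n:ℝ) ^ 4 := by
    rw [hT2]
    calc ‖_ / _‖ ≤ ((10 * M + M ^ 2) / (n:ℝ)) / (81 * (n:ℝ) ^ 4) :=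
          norm_div_le_of (hnum12 _ hwv) (hden14 _ _ _ _ hv0 hv0 hv1 hv2) (by positivity)
      _ ≤ (10 * M + M ^ 2) / (n:ℝ) ^ 4 := by
          rw [div_div]
          refine div_le_div_of_nonneg_left (by positivity) (by positivity) ?_
          nlinarith [pow_pos hnp 4]
  have hsum : ‖T0 + T1 + T2‖ ≤ (2 + 20 * M + 2 * M ^ 2) / (n:ℝ) ^ 4 := by
    calc ‖T0 + T1 + T2‖ ≤ ‖T0 + T1‖ + ‖T2‖ := norm_add_le _ _
      _ ≤ ‖T0‖ + ‖T1‖ + ‖T2‖ := by linarith [norm_add_le T0 T1]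
      _ ≤ 2 / (n:ℝ) ^ 4 + (10 * M + M ^ 2) / (n:ℝ) ^ 4 + (10 * M + M ^ 2) / (n:ℝ) ^ 4 := by
          linarith
      _ = (2 + 20 * M + 2 * M ^ 2) / (n:ℝ) ^ 4 := by ring
  calc ‖z₁ - z₂‖ * ‖a‖ ^ 2 * ‖T0 + T1 + T2‖
      ≤ ‖z₁ - z₂‖ * ‖a‖ ^ 2 * ((2 + 20 * M + 2 * M ^ 2) / (n:ℝ) ^ 4) := by
        refine mul_le_mul_of_nonneg_left hsum (by positivity)
    _ = ‖a‖ ^ 2 * (2 + 20 * M + 2 * M ^ 2) * ‖z₁ - z₂‖ / (n:ℝ) ^ 4 := by ring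

noncomputable def Acoef' (a : ℂ) (n : ℕ) (z : ℂ) (p : ℕ) : ℂ :=
  ∑' j : Fin p → Idx n, Sterm (mathieuV a) n z (n : ℤ) (n : ℤ) p j

section assembly
variable {a : ℂ} {M : ℝ} {n : ℕ}

lemma acoef'_norm_le (hn : 5 ≤ n) {z : ℂ} (hz : ‖z‖ ≤ 1) (k : ℕ) :
    ‖Acoef' a n z k‖ ≤ ‖a‖ * ((4 * (‖a‖ + 1)) / (3 * (n:ℝ))) ^ k := by
  have h3n := three_n_pos hn
  refine le_trans (tsum_sterm_norm_le hn hz) ?_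
  rw [div_pow, ← mul_div_assoc]
  have h1 : (2:ℝ) ^ k * (‖a‖ ^ (k + 1) * ((3 * (n:ℝ)) ^ k)⁻¹)
      = (2 ^ k * ‖a‖ ^ k) * ‖a‖ / (3 * (n:ℝ)) ^ k := by
    rw [pow_succ]; field_simp
  rw [h1]
  rw [div_le_div_iff₀ (by positivity) (by positivity)]
  have h2 : (2:ℝ) ^ k * ‖a‖ ^ k ≤ (4 * (‖a‖ + 1)) ^ k := by
    rw [← mul_pow]
    exact pow_le_pow_left₀ (by positivity) (by nlinarith [norm_nonneg a]) k
  have h3 : (0:ℝ) < (3 * (n:ℝ)) ^ k := by positivity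
  calc (2:ℝ) ^ k * ‖a‖ ^ k * ‖a‖ * (3 * (n:ℝ)) ^ k
      ≤ (4 * (‖a‖ + 1)) ^ k * ‖a‖ * (3 * (n:ℝ)) ^ k := by
        refine mul_le_mul_of_nonneg_right (mul_le_mul_of_nonneg_right h2 (norm_nonneg a)) h3.le
    _ = ‖a‖ * (4 * (‖a‖ + 1)) ^ k * (3 * (n:ℝ)) ^ k := by ring
  
lemma acoef'_diff_le (hn : 5 ≤ n) {z₁ z₂ : ℂ} (hz₁ : ‖z₁‖ ≤ 1) (hz₂ : ‖z₂‖ ≤ 1) (k : ℕ) :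
    ‖Acoef' a n z₁ k - Acoef' a n z₂ k‖
      ≤ ‖z₁ - z₂‖ * ((4 * (‖a‖ + 1)) / (3 * (n:ℝ))) ^ (k + 1) := by
  have h3n := three_n_pos hn
  refine le_trans (tsum_sterm_diff_le hn hz₁ hz₂) ?_
  have h1 : (2:ℝ) ^ k * (‖a‖ ^ (k + 1) * ((k:ℝ) * ‖z₁ - z₂‖ / (3 * (n:ℝ)) ^ (k + 1)))
      = ((k:ℝ) * 2 ^ k * ‖a‖ ^ (k + 1)) * ‖z₁ - z₂‖ / (3 * (n:ℝ)) ^ (k + 1) := by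
    field_simp
  rw [h1, div_pow, ← mul_div_assoc, div_le_div_iff₀ (by positivity) (by positivity)]
  have hk2 : (k:ℝ) ≤ 2 ^ k := by
    exact_mod_cast (Nat.lt_two_pow_self (n := k)).le
  have h2 : (k:ℝ) * 2 ^ k * ‖a‖ ^ (k + 1) ≤ (4 * (‖a‖ + 1)) ^ (k + 1) := by
    have e1 : (k:ℝ) * 2 ^ k * ‖a‖ ^ (k + 1) ≤ 2 ^ k * 2 ^ k * (‖a‖ + 1) ^ (k + 1) := by
      refine mul_le_mul (mul_le_mul_of_nonneg_right hk2 (by positivity)) ?_ (by positivity)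
        (by positivity)
      exact pow_le_pow_left₀ (norm_nonneg a) (by linarith [norm_nonneg a]) _
    have e2 : (2:ℝ) ^ k * 2 ^ k * (‖a‖ + 1) ^ (k + 1) ≤ 4 ^ (k + 1) * (‖a‖ + 1) ^ (k + 1) := by
      have : (2:ℝ) ^ k * 2 ^ k = 4 ^ k := by rw [← mul_pow]; norm_num
      rw [this]
      refine mul_le_mul_of_nonneg_right ?_ (by positivity)
      exact pow_le_pow_right₀ (by norm_num) (by omega)
    calc _ ≤ _ := e1
      _ ≤ _ := e2
      _ = (4 * (‖a‖ + 1)) ^ (k + 1) := by rw [← mul_pow]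
  calc (k:ℝ) * 2 ^ k * ‖a‖ ^ (k + 1) * ‖z₁ - z₂‖ * (3 * (n:ℝ)) ^ (k + 1)
      ≤ (4 * (‖a‖ + 1)) ^ (k + 1) * ‖z₁ - z₂‖ * (3 * (n:ℝ)) ^ (k + 1) := by
        refine mul_le_mul_of_nonneg_right (mul_le_mul_of_nonneg_right h2 (norm_nonneg _))
          (by positivity)
    _ = ‖z₁ - z₂‖ * (4 * (‖a‖ + 1)) ^ (k + 1) * (3 * (n:ℝ)) ^ (k + 1) := by ring

end assembly

/-- For every `M > 0` there are `C > 0` and `N` such that for all `n ≥ N` and all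
`z₁, z₂` with `|z₁|, |z₂| ≤ M/n²`,
`|α_n(z₁) - α_n(z₂) + (z₁ - z₂) a²/(8n²)| ≤ C |z₁ - z₂| / n⁴`. -/
theorem mathieu_stmt_18 (a : ℂ) (ha : a ≠ 0) (M : ℝ) (hM : 0 < M) :
    ∃ C > (0 : ℝ), ∃ N : ℕ, ∀ n ≥ N, ∀ z₁ z₂ : ℂ,
      ‖z₁‖ ≤ M / (n : ℝ) ^ 2 → ‖z₂‖ ≤ M / (n : ℝ) ^ 2 →
      ‖alphaC a n z₁ - alphaC a n z₂ + (z₁ - z₂) * a ^ 2 / (8 * (n : ℂ) ^ 2)‖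
        ≤ C * ‖z₁ - z₂‖ / (n : ℝ) ^ 4 := by
  set bb : ℝ := 4 * (‖a‖ + 1) with hbb
  have hbbpos : 0 < bb := by rw [hbb]; positivity
  have hCpos : 0 < ‖a‖ ^ 2 * (2 + 20 * M + 2 * M ^ 2) + bb ^ 4 := by
    have h1 : (0:ℝ) ≤ ‖a‖ ^ 2 * (2 + 20 * M + 2 * M ^ 2) := by nlinarith [norm_nonneg a, sq_nonneg (‖a‖)]
    nlinarith [pow_pos hbbpos 4]
  refine ⟨‖a‖ ^ 2 * (2 + 20 * M + 2 * M ^ 2) + bb ^ 4, hCpos,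
    ⌈M⌉₊ + ⌈8 * (‖a‖ + 1)⌉₊ + 5, ?_⟩
  intro n hn z₁ z₂ hz₁ hz₂
  have hn5 : 5 ≤ n := by omega
  have hn5R : (5:ℝ) ≤ (n:ℝ) := by exact_mod_cast hn5
  have hnp : (0:ℝ) < (n:ℝ) := by linarith
  have h3n : (0:ℝ) < 3 * (n:ℝ) := by linarith
  have hMn : M ≤ (n:ℝ) := by
    calc M ≤ (⌈M⌉₊ : ℝ) := Nat.le_ceil M
      _ ≤ (n:ℝ) := by exact_mod_cast (by omega : ⌈M⌉₊ ≤ n)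
  have hbbn : 2 * bb ≤ 3 * (n:ℝ) := by
    have h1 : 8 * (‖a‖ + 1) ≤ (⌈8 * (‖a‖ + 1)⌉₊ : ℝ) := Nat.le_ceil _
    have h2 : ((⌈8 * (‖a‖ + 1)⌉₊ : ℕ) : ℝ) ≤ (n:ℝ) := by
      exact_mod_cast (by omega : ⌈8 * (‖a‖ + 1)⌉₊ ≤ n)
    rw [hbb]; linarith
  have hM1 : M / (n:ℝ) ^ 2 ≤ 1 := by
    rw [div_le_one (by positivity)]; nlinarith
  have hz1' : ‖z₁‖ ≤ 1 := le_trans hz₁ hM1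
  have hz2' : ‖z₂‖ ≤ 1 := le_trans hz₂ hM1
  set r : ℝ := bb / (3 * (n:ℝ)) with hr
  have hr0 : 0 ≤ r := by rw [hr]; positivity
  have hr2 : r ≤ 1 / 2 := by
    rw [hr, div_le_iff₀ h3n]; linarith
  have hr1 : r < 1 := lt_of_le_of_lt hr2 (by norm_num)
  set d : ℝ := ‖z₁ - z₂‖ with hd
  have hd0 : 0 ≤ d := norm_nonneg _
  -- summability of the alpha series
  have hsummz : ∀ z : ℂ, ‖z‖ ≤ 1 → Summable (fun p : ℕ => Acoef a n z (p + 1)) := by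
    intro z hz
    refine Summable.of_norm_bounded (g := fun p => (‖a‖ * r) * r ^ p)
      ((summable_geometric_of_lt_one hr0 hr1).mul_left _) (fun p => ?_)
    have hb := acoef'_norm_le (a := a) hn5 hz (p + 1)
    rw [← hbb, ← hr] at hb
    have he : Acoef a n z (p + 1) = Acoef' a n z (p + 1) := rfl
    rw [he]
    calc ‖Acoef' a n z (p + 1)‖ ≤ ‖a‖ * r ^ (p + 1) := hb
      _ = (‖a‖ * r) * r ^ p := by rw [pow_succ]; ring
  have hS : ∀ z : ℂ, ‖z‖ ≤ 1 → Summable (fun p : ℕ => Acoef a n z (p + 1 + 1)) := by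
    intro z hz
    have := (hsummz z hz).comp_injective (add_left_injective 1)
    exact this
  -- decomposition
  have hdec : ∀ z : ℂ, ‖z‖ ≤ 1 →
      alphaC a n z = Acoef a n z 1 + ∑' p : ℕ, Acoef a n z (p + 1 + 1) := by
    intro z hz
    rw [alphaC]
    exact Summable.tsum_eq_zero_add (hsummz z hz)
  have hsplit : alphaC a n z₁ - alphaC a n z₂ + (z₁ - z₂) * a ^ 2 / (8 * (n:ℂ) ^ 2)
      = (Acoef a n z₁ 1 - Acoef a n z₂ 1 + (z₁ - z₂) * a ^ 2 / (8 * (n:ℂ) ^ 2))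
        + ((∑' p : ℕ, Acoef a n z₁ (p + 1 + 1)) - ∑' p : ℕ, Acoef a n z₂ (p + 1 + 1)) := by
    rw [hdec z₁ hz1', hdec z₂ hz2']
    ring
  rw [hsplit]
  -- main term bound
  have hmain : ‖Acoef a n z₁ 1 - Acoef a n z₂ 1 + (z₁ - z₂) * a ^ 2 / (8 * (n:ℂ) ^ 2)‖
      ≤ ‖a‖ ^ 2 * (2 + 20 * M + 2 * M ^ 2) * d / (n:ℝ) ^ 4 := by
    have e1 : Acoef a n z₁ 1 = a ^ 2 / ((n:ℂ) ^ 2 - ((n:ℂ) - 2) ^ 2 + z₁)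
        + a ^ 2 / ((n:ℂ) ^ 2 - ((n:ℂ) + 2) ^ 2 + z₁) := A1_eq hn5 z₁
    have e2 : Acoef a n z₂ 1 = a ^ 2 / ((n:ℂ) ^ 2 - ((n:ℂ) - 2) ^ 2 + z₂)
        + a ^ 2 / ((n:ℂ) ^ 2 - ((n:ℂ) + 2) ^ 2 + z₂) := A1_eq hn5 z₂
    rw [e1, e2, hd]
    exact main_est a hn5 hM hMn hz₁ hz₂
  -- tail bound
  have htail : ‖(∑' p : ℕ, Acoef a n z₁ (p + 1 + 1)) - ∑' p : ℕ, Acoef a n z₂ (p + 1 + 1)‖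
      ≤ bb ^ 4 * d / (n:ℝ) ^ 4 := by
    rw [← Summable.tsum_sub (hS z₁ hz1') (hS z₂ hz2')]
    have hG : Summable (fun p : ℕ => Acoef a n z₁ (p + 1 + 1) - Acoef a n z₂ (p + 1 + 1)) :=
      (hS z₁ hz1').sub (hS z₂ hz2')
    rw [Summable.tsum_eq_zero_add hG]
    have hG0 : Acoef a n z₁ (0 + 1 + 1) - Acoef a n z₂ (0 + 1 + 1) = 0 := by
      have h1 : Acoef a n z₁ 2 = 0 := Acoef_even a n z₁ 2 (by norm_num)
      have h2 : Acoef a n z₂ 2 = 0 := Acoef_even a n z₂ 2 (by norm_num)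
      norm_num [h1, h2]
    rw [hG0, zero_add]
    have hbound : ∀ p : ℕ,
        ‖Acoef a n z₁ (p + 1 + 1 + 1) - Acoef a n z₂ (p + 1 + 1 + 1)‖ ≤ (d * r ^ 4) * r ^ p := by
      intro p
      have hb := acoef'_diff_le (a := a) hn5 hz1' hz2' (p + 3)
      rw [← hbb, ← hr, ← hd] at hb
      have he : (Acoef a n z₁ (p + 1 + 1 + 1) - Acoef a n z₂ (p + 1 + 1 + 1))
          = (Acoef' a n z₁ (p + 3) - Acoef' a n z₂ (p + 3)) := by norm_num [Acoef, Acoef']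
      rw [he]
      calc ‖Acoef' a n z₁ (p + 3) - Acoef' a n z₂ (p + 3)‖ ≤ d * r ^ (p + 3 + 1) := hb
        _ = (d * r ^ 4) * r ^ p := by rw [show p + 3 + 1 = 4 + p by omega, pow_add]; ring
    have hgeo : HasSum (fun p : ℕ => (d * r ^ 4) * r ^ p) ((d * r ^ 4) * (1 - r)⁻¹) :=
      (hasSum_geometric_of_lt_one hr0 hr1).mul_left _
    calc ‖∑' p : ℕ, (Acoef a n z₁ (p + 1 + 1 + 1) - Acoef a n z₂ (p + 1 + 1 + 1))‖
        ≤ (d * r ^ 4) * (1 - r)⁻¹ := tsum_of_norm_bounded hgeo hbound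
      _ ≤ (d * r ^ 4) * 2 := by
          refine mul_le_mul_of_nonneg_left ?_ (by positivity)
          calc (1 - r)⁻¹ ≤ ((1:ℝ)/2)⁻¹ := inv_anti₀ (by norm_num) (by linarith)
            _ = 2 := by norm_num
      _ ≤ bb ^ 4 * d / (n:ℝ) ^ 4 := by
          rw [hr, div_pow]
          have hb4 : (0:ℝ) < bb ^ 4 := pow_pos hbbpos 4
          have e : d * (bb ^ 4 / (3 * (n:ℝ)) ^ 4) * 2 = (2 * d * bb ^ 4) / (81 * (n:ℝ) ^ 4) := by
            field_simp
            ring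
          rw [e, div_le_div_iff₀ (by positivity) (by positivity)]
          nlinarith [mul_nonneg (mul_nonneg hd0 hb4.le) (pow_pos hnp 4).le]
  calc ‖_ + _‖ ≤ _ := norm_add_le _ _
    _ ≤ ‖a‖ ^ 2 * (2 + 20 * M + 2 * M ^ 2) * d / (n:ℝ) ^ 4 + bb ^ 4 * d / (n:ℝ) ^ 4 :=
        add_le_add hmain htail
    _ = (‖a‖ ^ 2 * (2 + 20 * M + 2 * M ^ 2) + bb ^ 4) * ‖z₁ - z₂‖ / (n:ℝ) ^ 4 := by
        rw [← hd]; ring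
end
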